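/- arXiv:1812.01128 — 6 statements merged into one kernel-verified Lean document; each statement's English description precedes it below -/
import Mathlib

section
/- Let R be an integral domain which is integrally closed in its fraction field K, and let g ∈ GL_n(K) be a matrix of finite order (g^m = 1 for some m ≥ 1) whose characteristic polynomial splits over K. Then g is conjugate in GL_n(K) to a matrix defined over R: there exist h ∈ GL_n(K) and g₀ ∈ GL_n(R) such that h⁻¹ · g · h equals the image of g₀ under the canonical map GL_n(R) → GL_n(K). -/
/-!
Let `R` be an integral domain which is integrally closed in its fraction field `K`,
and let `g ∈ GL n K` be a matrix of finite order (`g ^ m = 1` for some `m ≥ 1`) whose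
characteristic polynomial splits over `K`.  Then `g` is conjugate in `GL n K` to a matrix
defined over `R`.
-/

open Polynomial Matrix

private lemma units_conj_pow' {α : Type*} [Monoid α] (u : αˣ) (x : α) (t : ℕ) :
    (↑u⁻¹ * x * ↑u) ^ t = ↑u⁻¹ * x ^ t * ↑u := by
  induction t with
  | zero => simp
  | succ t ih =>
    rw [pow_succ, ih, pow_succ]
    simp [mul_assoc, Units.mul_inv_cancel_left]

private lemma aeval_units_conj' {K : Type*} [CommSemiring K] {A : Type*} [Ring A] [Algebra K A]
    (u : Aˣ) (x : A) (q : Polynomial K) :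
    Polynomial.aeval (↑u⁻¹ * x * ↑u) q = ↑u⁻¹ * Polynomial.aeval x q * ↑u := by
  rw [Polynomial.aeval_eq_sum_range, Polynomial.aeval_eq_sum_range, Finset.mul_sum,
    Finset.sum_mul]
  refine Finset.sum_congr rfl fun i _ => ?_
  rw [units_conj_pow', mul_smul_comm, smul_mul_assoc]

/-- Embed a `k × k` matrix into the lower-right corner of a `(k+1) × (k+1)` matrix,
with a `1` in the upper-left corner. -/
private def embM {K : Type*} [Semiring K] {k : ℕ} (X : Matrix (Fin k) (Fin k) K) :
    Matrix (Fin (k + 1)) (Fin (k + 1)) K :=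
  Matrix.of (Fin.cons (Fin.cons 1 0) fun i => Fin.cons 0 (X i))

section EmbM

variable {K : Type*} [Semiring K] {k : ℕ} (X Y : Matrix (Fin k) (Fin k) K)

@[simp] private lemma embM_zero_zero : embM X 0 0 = 1 := rfl
@[simp] private lemma embM_zero_succ (j : Fin k) : embM X 0 j.succ = 0 := rfl
@[simp] private lemma embM_succ_zero (i : Fin k) : embM X i.succ 0 = 0 := rfl
@[simp] private lemma embM_succ_succ (i j : Fin k) : embM X i.succ j.succ = X i j := rfl

private lemma embM_mul : embM X * embM Y = embM (X * Y) := by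
  ext i j
  refine Fin.cases ?_ (fun i => ?_) i <;> refine Fin.cases ?_ (fun j => ?_) j <;>
    simp [Matrix.mul_apply, Fin.sum_univ_succ]

private lemma embM_one : embM (1 : Matrix (Fin k) (Fin k) K) = 1 := by
  ext i j
  refine Fin.cases ?_ (fun i => ?_) i <;> refine Fin.cases ?_ (fun j => ?_) j <;>
    simp [Matrix.one_apply, Fin.succ_ne_zero, (Fin.succ_ne_zero _).symm, Fin.succ_inj]

/-- The "first column supported at `0`" property. -/
private def HasCol0 {k : ℕ} (X : Matrix (Fin (k + 1)) (Fin (k + 1)) K) : Prop :=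
  ∀ i : Fin k, X i.succ 0 = 0

private lemma hasCol0_embM : HasCol0 (embM X) := fun i => rfl

private lemma hasCol0_one : HasCol0 (1 : Matrix (Fin (k + 1)) (Fin (k + 1)) K) := fun i => by
  simp [Matrix.one_apply, Fin.succ_ne_zero]

private lemma hasCol0_mul {X Y : Matrix (Fin (k + 1)) (Fin (k + 1)) K}
    (hX : HasCol0 X) (hY : HasCol0 Y) : HasCol0 (X * Y) := by
  intro i
  rw [Matrix.mul_apply, Fin.sum_univ_succ]
  simp only [hX i, zero_mul, zero_add]
  exact Finset.sum_eq_zero fun l _ => by rw [hY l, mul_zero]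

private lemma corner_mul {X Y : Matrix (Fin (k + 1)) (Fin (k + 1)) K} (hX : HasCol0 X) :
    (X * Y).submatrix Fin.succ Fin.succ =
      X.submatrix Fin.succ Fin.succ * Y.submatrix Fin.succ Fin.succ := by
  ext i j
  simp [Matrix.mul_apply, Fin.sum_univ_succ, hX i]

private lemma corner_one :
    (1 : Matrix (Fin (k + 1)) (Fin (k + 1)) K).submatrix Fin.succ Fin.succ = 1 := by
  ext i j
  simp [Matrix.one_apply, Fin.succ_inj]

private lemma corner_embM : (embM X).submatrix Fin.succ Fin.succ = X := by
  ext i j; simp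

private lemma mul_embM_col0 (Z : Matrix (Fin (k + 1)) (Fin (k + 1)) K) (a : Fin (k + 1)) :
    (Z * embM X) a 0 = Z a 0 := by
  rw [Matrix.mul_apply, Fin.sum_univ_succ]
  simp

private lemma embM_mul_row0 (Z : Matrix (Fin (k + 1)) (Fin (k + 1)) K) (b : Fin (k + 1)) :
    (embM X * Z) 0 b = Z 0 b := by
  rw [Matrix.mul_apply, Fin.sum_univ_succ]
  simp

end EmbM

section PowCorner

variable {K : Type*} [CommRing K] {k : ℕ}

private lemma pow_corner {X : Matrix (Fin (k + 1)) (Fin (k + 1)) K} (hX : HasCol0 X) (t : ℕ) :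
    HasCol0 (X ^ t) ∧
      (X ^ t).submatrix Fin.succ Fin.succ = (X.submatrix Fin.succ Fin.succ) ^ t := by
  induction t with
  | zero => simpa using ⟨hasCol0_one, corner_one⟩
  | succ t ih =>
    rw [pow_succ, pow_succ]
    exact ⟨hasCol0_mul ih.1 hX, by rw [corner_mul ih.1, ih.2]⟩

private lemma aeval_corner {X : Matrix (Fin (k + 1)) (Fin (k + 1)) K} (hX : HasCol0 X)
    (q : Polynomial K) :
    Polynomial.aeval (X.submatrix Fin.succ Fin.succ) q =
      (Polynomial.aeval X q).submatrix Fin.succ Fin.succ := by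
  ext i j
  rw [Polynomial.aeval_eq_sum_range, Polynomial.aeval_eq_sum_range]
  simp only [Matrix.sum_apply, Matrix.smul_apply, Matrix.submatrix_apply, smul_eq_mul]
  refine Finset.sum_congr rfl fun t _ => ?_
  rw [← (pow_corner hX t).2]
  rfl

end PowCorner

/-- Any matrix over a field annihilated by a nonzero split polynomial, and of finite order,
is conjugate to an upper triangular matrix whose diagonal entries are `m`-th roots of unity. -/
private lemma triang {K : Type*} [Field K] (m : ℕ) :
    ∀ (k : ℕ) (M : Matrix (Fin k) (Fin k) K) (q : Polynomial K), q ≠ 0 →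
      q.Splits → Polynomial.aeval M q = 0 → M ^ m = 1 →
      ∃ P : (Matrix (Fin k) (Fin k) K)ˣ,
        (∀ i j, j < i → ((P⁻¹).val * M * P.val) i j = 0) ∧
        ∀ i, (((P⁻¹).val * M * P.val) i i) ^ m = 1 := by
  intro k
  induction k with
  | zero =>
    intro M q _ _ _ _
    exact ⟨1, fun i => i.elim0, fun i => i.elim0⟩
  | succ k ih =>
    intro M q hq0 hqs hqM hMm
    have hint : IsIntegral K M := ⟨M.charpoly, M.charpoly_monic, M.aeval_self_charpoly⟩
    have hps : (minpoly K M).Splits :=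
      Polynomial.Splits.of_dvd hqs hq0 (minpoly.dvd K M hqM)
    have hp0 : minpoly K M ≠ 0 := minpoly.ne_zero hint
    obtain ⟨lam, hlam⟩ :=
      Polynomial.Splits.exists_eval_eq_zero hps (minpoly.degree_pos hint).ne'
    have hdvd : (X - C lam) ∣ minpoly K M := by
      rw [Polynomial.dvd_iff_isRoot]
      simpa using hlam
    obtain ⟨r, hr⟩ := hdvd
    have hr0 : r ≠ 0 := by rintro rfl; rw [mul_zero] at hr; exact hp0 hr
    have hrM : Polynomial.aeval M r ≠ 0 := by
      intro h0
      have hlt : r.degree < (minpoly K M).degree := by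
        rw [hr, Polynomial.degree_mul, Polynomial.degree_X_sub_C,
          Polynomial.degree_eq_natDegree hr0]
        exact_mod_cast lt_one_add _
      exact absurd (minpoly.degree_le_of_ne_zero K M hr0 h0) (not_le.mpr hlt)
    have key : (M - lam • 1) * Polynomial.aeval M r = 0 := by
      have h1 := minpoly.aeval K M
      rw [hr, _root_.map_mul, _root_.map_sub, Polynomial.aeval_X, Polynomial.aeval_C,
        Algebra.algebraMap_eq_smul_one] at h1
      exact h1
    obtain ⟨i0, j0, hij⟩ : ∃ i j, Polynomial.aeval M r i j ≠ 0 := by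
      by_contra h
      push_neg at h
      exact hrM (by ext i j; simpa using h i j)
    set v : Fin (k + 1) → K := fun i => Polynomial.aeval M r i j0 with hvdef
    have hv0 : v ≠ 0 := fun h => hij (congrFun h i0)
    have hMv : M *ᵥ v = lam • v := by
      have h1 : (M - lam • (1 : Matrix _ _ K)) *ᵥ v = 0 := by
        ext i
        have h2 : ((M - lam • 1) * Polynomial.aeval M r) i j0 = (0 : Matrix _ _ K) i j0 := by
          rw [key]
        simpa [Matrix.mulVec, dotProduct, Matrix.mul_apply] using h2
      rwa [Matrix.sub_mulVec, Matrix.smul_mulVec, Matrix.one_mulVec, sub_eq_zero] at h1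
    have hpowv : ∀ t, (M ^ t) *ᵥ v = lam ^ t • v := by
      intro t
      induction t with
      | zero => simp
      | succ t iht =>
        rw [pow_succ, ← Matrix.mulVec_mulVec, hMv, Matrix.mulVec_smul, iht, smul_smul,
          pow_succ, mul_comm]
    have hlm : lam ^ m = 1 := by
      have h1 : lam ^ m • v = v := by rw [← hpowv m, hMm, Matrix.one_mulVec]
      obtain ⟨i1, hi1⟩ : ∃ i, v i ≠ 0 := by
        by_contra h
        push_neg at h
        exact hv0 (funext h)
      have h2 : lam ^ m * v i1 = 1 * v i1 := by
        rw [one_mul]; exact congrFun h1 i1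
      exact mul_right_cancel₀ hi1 h2
    -- build a basis starting with `v`
    obtain ⟨U, hU⟩ := Submodule.exists_isCompl (K ∙ v)
    have hrank : Module.finrank K U = k := by
      have h1 := Submodule.finrank_add_eq_of_isCompl hU
      rw [finrank_span_singleton hv0] at h1
      have h2 : Module.finrank K (Fin (k + 1) → K) = k + 1 := by simp
      omega
    let bU : Module.Basis (Fin k) K U := Module.finBasisOfFinrankEq K U hrank
    have hli : ∀ (c : K), ∀ x ∈ U, c • v + x = 0 → c = 0 := by
      intro c x hx hcx
      by_contra hc
      have hx' : c • v ∈ U := by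
        have : c • v = -x := eq_neg_of_add_eq_zero_left hcx
        rw [this]; exact U.neg_mem hx
      have hvU : v ∈ U := by
        have h3 := U.smul_mem c⁻¹ hx'
        rwa [smul_smul, inv_mul_cancel₀ hc, one_smul] at h3
      exact hv0 (Submodule.disjoint_def.mp hU.disjoint v
        (Submodule.mem_span_singleton_self v) hvU)
    have hsp : ∀ z : Fin (k + 1) → K, ∃ c : K, z + c • v ∈ U := by
      intro z
      have hz : z ∈ (K ∙ v) ⊔ U := by rw [hU.sup_eq_top]; trivial
      obtain ⟨y, hy, u, hu, hyu⟩ := Submodule.mem_sup.mp hz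
      obtain ⟨a, rfl⟩ := Submodule.mem_span_singleton.mp hy
      refine ⟨-a, ?_⟩
      have : z + (-a) • v = u := by rw [← hyu]; module
      rw [this]; exact hu
    let b : Module.Basis (Fin (k + 1)) K (Fin (k + 1) → K) := Module.Basis.mkFinCons v bU hli hsp
    have hb0 : b 0 = v := by
      have := Module.Basis.coe_mkFinCons v bU hli hsp
      rw [show b = Module.Basis.mkFinCons v bU hli hsp from rfl, this]
      exact Fin.cons_zero _ _
    let e : Module.Basis (Fin (k + 1)) K (Fin (k + 1) → K) := Pi.basisFun K (Fin (k + 1))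
    letI : Invertible (e.toMatrix b) := e.invertibleToMatrix b
    let P1 : (Matrix (Fin (k + 1)) (Fin (k + 1)) K)ˣ := unitOfInvertible (e.toMatrix b)
    have hP1e0 : (P1 : Matrix _ _ K) *ᵥ (Pi.single 0 1 : Fin (k+1) → K) = v := by
      ext i
      rw [Matrix.mulVec_single]
      show e.toMatrix b i 0 * 1 = v i
      rw [mul_one, Module.Basis.toMatrix_apply, hb0]
      simp [e]
    set M' : Matrix (Fin (k + 1)) (Fin (k + 1)) K := (P1⁻¹).val * M * P1.val with hM'def
    have hM'e0 : M' *ᵥ (Pi.single 0 1 : Fin (k+1) → K) = lam • (Pi.single 0 1 : Fin (k+1) → K) := by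
      have h5 : (P1⁻¹).val *ᵥ v = (Pi.single 0 1 : Fin (k+1) → K) := by
        conv_lhs => rw [← hP1e0]
        rw [Matrix.mulVec_mulVec, Units.inv_mul, Matrix.one_mulVec]
      rw [hM'def, ← Matrix.mulVec_mulVec, ← Matrix.mulVec_mulVec, hP1e0, hMv,
        Matrix.mulVec_smul, h5]
    have hCol : HasCol0 M' := by
      intro i
      have h6 := congrFun hM'e0 i.succ
      rw [Matrix.mulVec_single] at h6
      simpa [Pi.single_apply, Fin.succ_ne_zero] using h6
    have hM'00 : M' 0 0 = lam := by
      have h6 := congrFun hM'e0 0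
      rw [Matrix.mulVec_single] at h6
      simpa [Pi.single_apply] using h6
    set A : Matrix (Fin k) (Fin k) K := M'.submatrix Fin.succ Fin.succ with hAdef
    have hM'm : M' ^ m = 1 := by
      rw [hM'def, units_conj_pow', hMm, mul_one, Units.inv_mul]
    have hAm : A ^ m = 1 := by
      rw [hAdef, ← (pow_corner hCol m).2, hM'm, corner_one]
    have hAq : Polynomial.aeval A q = 0 := by
      rw [hAdef, aeval_corner hCol, hM'def, aeval_units_conj', hqM, mul_zero, zero_mul]
      ext i j; simp
    obtain ⟨Q, hQtri, hQdiag⟩ := ih A q hq0 hqs hAq hAm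
    let Qe : (Matrix (Fin (k + 1)) (Fin (k + 1)) K)ˣ :=
      ⟨embM ↑Q, embM ↑Q⁻¹,
        by rw [embM_mul, Units.mul_inv, embM_one],
        by rw [embM_mul, Units.inv_mul, embM_one]⟩
    have hQeval : Qe.val = embM Q.val := rfl
    have hQeinv : (Qe⁻¹).val = embM (Q⁻¹).val := rfl
    set T : Matrix (Fin (k + 1)) (Fin (k + 1)) K :=
      embM (Q⁻¹).val * M' * embM Q.val with hTdef
    have hT : ((P1 * Qe)⁻¹).val * M * (P1 * Qe).val = T := by
      rw [hTdef, hM'def, _root_.mul_inv_rev, Units.val_mul, Units.val_mul, hQeval, hQeinv]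
      simp only [mul_assoc]
    have hColT : HasCol0 T := by
      rw [hTdef]
      exact hasCol0_mul (hasCol0_mul (hasCol0_embM _) hCol) (hasCol0_embM _)
    have hcorner : T.submatrix Fin.succ Fin.succ = (Q⁻¹).val * A * Q.val := by
      rw [hTdef, corner_mul (hasCol0_mul (hasCol0_embM _) hCol), corner_mul (hasCol0_embM _),
        corner_embM, corner_embM, hAdef]
    have hT00 : T 0 0 = lam := by
      rw [hTdef, mul_embM_col0, embM_mul_row0, hM'00]
    refine ⟨P1 * Qe, ?_, ?_⟩
    · intro i j hji
      rw [hT]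
      rcases Fin.eq_zero_or_eq_succ i with rfl | ⟨i', rfl⟩
      · exact absurd hji (not_lt.mpr (Fin.zero_le j))
      · rcases Fin.eq_zero_or_eq_succ j with rfl | ⟨j', rfl⟩
        · exact hColT i'
        · have h7 : T i'.succ j'.succ = ((Q⁻¹).val * A * Q.val) i' j' := by
            rw [← hcorner]; rfl
          rw [h7]
          exact hQtri i' j' (Fin.succ_lt_succ_iff.mp hji)
    · intro i
      rw [hT]
      rcases Fin.eq_zero_or_eq_succ i with rfl | ⟨i', rfl⟩
      · rw [hT00]; exact hlm
      · have h8 : T i'.succ i'.succ = ((Q⁻¹).val * A * Q.val) i' i' := by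
          rw [← hcorner]; rfl
        rw [h8]
        exact hQdiag i'

theorem finite_order_GL_conjugate_to_integral
    {R K : Type*} [CommRing R] [IsDomain R] [IsIntegrallyClosed R]
    [Field K] [Algebra R K] [IsFractionRing R K]
    {n : Type*} [Fintype n] [DecidableEq n]
    (g : Matrix.GeneralLinearGroup n K)
    (m : ℕ) (hm : 1 ≤ m) (hord : g ^ m = 1)
    (hsplit : (Matrix.charpoly (g : Matrix n n K)).Splits) :
    ∃ (h : Matrix.GeneralLinearGroup n K) (g₀ : Matrix.GeneralLinearGroup n R),
      h⁻¹ * g * h = Matrix.GeneralLinearGroup.map (algebraMap R K) g₀ := by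
  classical
  set k := Fintype.card n with hk
  let en : n ≃ Fin k := Fintype.equivFin n
  set M : Matrix (Fin k) (Fin k) K := Matrix.reindex en en (g : Matrix n n K) with hMdef
  set φ : Matrix (Fin k) (Fin k) K ≃ₐ[K] Matrix n n K := Matrix.reindexAlgEquiv K K en.symm
    with hφdef
  set φR : Matrix (Fin k) (Fin k) R ≃ₐ[R] Matrix n n R := Matrix.reindexAlgEquiv R R en.symm
    with hφRdef
  have hgm : (g : Matrix n n K) ^ m = 1 := by
    have h0 := congrArg (Units.val) hord
    simpa using h0
  have hMm : M ^ m = 1 := by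
    have h1 : M = Matrix.reindexAlgEquiv K K en (g : Matrix n n K) := rfl
    rw [h1, ← _root_.map_pow, hgm, _root_.map_one]
  have hsplitM : M.charpoly.Splits := by
    rw [hMdef, Matrix.charpoly_reindex]
    exact hsplit
  obtain ⟨P, hPtri, hPdiag⟩ := triang m k M M.charpoly M.charpoly_monic.ne_zero hsplitM
    M.aeval_self_charpoly hMm
  set T : Matrix (Fin k) (Fin k) K := (P⁻¹).val * M * P.val with hTdef
  have hTm : T ^ m = 1 := by rw [hTdef, units_conj_pow', hMm, mul_one, Units.inv_mul]
  have hdiag : ∀ i, ∃ d : R, algebraMap R K d = T i i := by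
    intro i
    refine IsIntegrallyClosed.isIntegral_iff.mp
      ⟨X ^ m - C 1, Polynomial.monic_X_pow_sub_C 1 (by omega), ?_⟩
    rw [Polynomial.eval₂_sub, Polynomial.eval₂_X_pow, Polynomial.eval₂_C, _root_.map_one,
      hPdiag i, sub_self]
  obtain ⟨s, hs⟩ := IsLocalization.exist_integer_multiples (nonZeroDivisors R)
    (Finset.univ : Finset (Fin k × Fin k)) (fun p => T p.1 p.2)
  set a : K := algebraMap R K (s : R) with hadef
  have ha0 : a ≠ 0 := by
    rw [hadef]
    intro h0
    exact nonZeroDivisors.coe_ne_zero s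
      (IsFractionRing.injective R K (h0.trans (_root_.map_zero _).symm))
  have hDf1 : (fun i : Fin k => a ^ (i : ℕ) * (a ^ (i : ℕ))⁻¹) = fun _ => (1 : K) :=
    funext fun i => mul_inv_cancel₀ (pow_ne_zero _ ha0)
  have hDf2 : (fun i : Fin k => (a ^ (i : ℕ))⁻¹ * a ^ (i : ℕ)) = fun _ => (1 : K) :=
    funext fun i => inv_mul_cancel₀ (pow_ne_zero _ ha0)
  let D : (Matrix (Fin k) (Fin k) K)ˣ :=
    ⟨Matrix.diagonal fun i => a ^ (i : ℕ),
     Matrix.diagonal fun i => (a ^ (i : ℕ))⁻¹,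
     by rw [Matrix.diagonal_mul_diagonal, hDf1, Matrix.diagonal_one],
     by rw [Matrix.diagonal_mul_diagonal, hDf2, Matrix.diagonal_one]⟩
  set T' : Matrix (Fin k) (Fin k) K := (D⁻¹).val * T * D.val with hT'def
  have hT'app : ∀ i j, T' i j = (a ^ (i : ℕ))⁻¹ * T i j * a ^ (j : ℕ) := by
    intro i j
    rw [hT'def]
    show ((Matrix.diagonal fun l : Fin k => (a ^ (l : ℕ))⁻¹) * T *
      Matrix.diagonal fun l : Fin k => a ^ (l : ℕ)) i j = _
    rw [Matrix.mul_diagonal, Matrix.diagonal_mul]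
  have hent : ∀ i j, ∃ c : R, algebraMap R K c = T' i j := by
    intro i j
    rcases lt_trichotomy j i with hlt | heq | hlt
    · exact ⟨0, by rw [_root_.map_zero, hT'app, hPtri i j hlt, mul_zero, zero_mul]⟩
    · subst heq
      obtain ⟨d, hd⟩ := hdiag j
      refine ⟨d, ?_⟩
      rw [hT'app, mul_comm ((a ^ (j : ℕ))⁻¹) (T j j), mul_assoc,
        inv_mul_cancel₀ (pow_ne_zero _ ha0), mul_one, hd]
    · obtain ⟨c, hc⟩ := hs (i, j) (Finset.mem_univ _)
      have hc' : algebraMap R K c = a * T i j := by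
        rw [hc]
        show (s : R) • T i j = a * T i j
        rw [Algebra.smul_def, hadef]
      obtain ⟨t', ht'⟩ : ∃ t', (j : ℕ) = (i : ℕ) + t' + 1 :=
        ⟨(j : ℕ) - (i : ℕ) - 1, by omega⟩
      refine ⟨c * (s : R) ^ t', ?_⟩
      rw [_root_.map_mul, _root_.map_pow, hc', hT'app, ht', ← hadef, pow_add, pow_add, pow_one]
      field_simp
  choose N hN using hent
  have hmapN : (Matrix.of N).map (algebraMap R K) = T' := by
    ext i j
    exact hN i j
  have hT'm : T' ^ m = 1 := by rw [hT'def, units_conj_pow', hTm, mul_one, Units.inv_mul]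
  have hdet2 : algebraMap R K (Matrix.of N).det = T'.det := by
    rw [RingHom.map_det, RingHom.mapMatrix_apply, hmapN]
  have hdetm : (Matrix.of N).det ^ m = 1 := by
    apply IsFractionRing.injective R K
    rw [_root_.map_pow, hdet2, ← Matrix.det_pow, hT'm, Matrix.det_one, _root_.map_one]
  have hdet1 : (Matrix.of N).det * (Matrix.of N).det ^ (m - 1) = 1 := by
    rw [← pow_succ', Nat.sub_add_cancel hm]
    exact hdetm
  have hNunit : IsUnit (Matrix.of N) :=
    (Matrix.isUnit_iff_isUnit_det _).mpr (IsUnit.of_mul_eq_one _ hdet1)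
  obtain ⟨g0, hg0⟩ := hNunit
  let φKm : Matrix (Fin k) (Fin k) K →* Matrix n n K := φ.toRingEquiv.toMonoidHom
  let φRm : Matrix (Fin k) (Fin k) R →* Matrix n n R := φR.toRingEquiv.toMonoidHom
  refine ⟨Units.map φKm (P * D), Units.map φRm g0, Units.ext ?_⟩
  have h1 : ((Units.map φKm (P * D))⁻¹).val = φ (((P * D)⁻¹).val) := by
    rw [← map_inv (Units.map φKm) (P * D)]
    rfl
  have h2 : (Units.map φKm (P * D)).val = φ ((P * D).val) := rfl
  have hgval : (g : Matrix n n K) = φ M := by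
    rw [hMdef, hφdef]
    simp
  rw [Units.val_mul, Units.val_mul, h1, h2, hgval, ← _root_.map_mul, ← _root_.map_mul]
  have hPD : ((P * D)⁻¹).val * M * (P * D).val = T' := by
    rw [hT'def, hTdef, _root_.mul_inv_rev, Units.val_mul, Units.val_mul]
    simp only [mul_assoc]
  rw [hPD]
  show φ T' = ((Matrix.GeneralLinearGroup.map (algebraMap R K) (Units.map φRm g0)) :
    Matrix n n K)
  have hRHS : ((Matrix.GeneralLinearGroup.map (algebraMap R K) (Units.map φRm g0)) :
      Matrix n n K) = (φR (g0 : Matrix (Fin k) (Fin k) R)).map (algebraMap R K) := rfl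
  rw [hRHS, hg0, ← hmapN, hφdef, hφRdef]
  simp [Matrix.reindexAlgEquiv_apply, Matrix.reindex_apply, Matrix.submatrix_map]
end

section
/- Let R be a commutative ring and let (x, y) be a regular sequence in R, i.e. x is a nonzerodivisor on R and y is a nonzerodivisor on R/(x). Then for every flat R-module M the sequence 0 → M → M_x ⊕ M_y → M_{xy} is exact, where M_x, M_y, M_{xy} denote the localizations of M at the powers of x, y and xy respectively, the first map is m ↦ (m/1, m/1), and the second map sends (u, v) to the difference of their images in M_{xy}. -/
open TensorProduct

section Aux

variable {R : Type*} [CommRing R] {M : Type*} [AddCommGroup M] [Module R M]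

private lemma flat_smul_cancel [Module.Flat R M] {s : R} (hs : s ∈ nonZeroDivisors R)
    {m : M} (h : s • m = 0) : m = 0 := by
  have hinj : Function.Injective ((LinearMap.lsmul R R) s) := by
    intro a b hab
    simp only [LinearMap.lsmul_apply, smul_eq_mul] at hab
    have h0 : (a - b) * s = 0 := by rw [sub_mul, mul_comm a s, mul_comm b s, hab, sub_self]
    exact sub_eq_zero.mp (hs.2 _ h0)
  have hT := Module.Flat.lTensor_preserves_injective_linearMap (M := M)
    ((LinearMap.lsmul R R) s) hinj
  have h1 : ((LinearMap.lsmul R R s).lTensor M) (m ⊗ₜ[R] (1 : R)) = 0 := by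
    simp only [LinearMap.lTensor_tmul, LinearMap.lsmul_apply, smul_eq_mul, mul_one]
    rw [show m ⊗ₜ[R] s = m ⊗ₜ[R] (s • (1 : R)) by rw [smul_eq_mul, mul_one],
      tmul_smul, smul_tmul', h, zero_tmul]
  have h2 : m ⊗ₜ[R] (1 : R) = 0 := hT (by rw [h1, map_zero])
  have h3 := congrArg (TensorProduct.rid R M) h2
  simpa using h3

private lemma flat_key [Module.Flat R M] {s t : R} (hs : s ∈ nonZeroDivisors R)
    (hst : ∀ r : R, t * r ∈ Ideal.span {s} → r ∈ Ideal.span {s})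
    {a b : M} (h : t • a = s • b) : ∃ m : M, a = s • m ∧ b = t • m := by
  set f₀ : R →ₗ[R] R × R := (LinearMap.lsmul R R s).prod (LinearMap.lsmul R R t) with hf₀
  set g₀ : (R × R) →ₗ[R] R :=
    t • LinearMap.fst R R R - s • LinearMap.snd R R R with hg₀
  have hex : Function.Exact f₀ g₀ := by
    intro p
    constructor
    · intro hp
      simp only [hg₀, LinearMap.sub_apply, LinearMap.smul_apply, LinearMap.fst_apply,
        LinearMap.snd_apply, smul_eq_mul] at hp
      have hp' : t * p.1 = s * p.2 := by linear_combination hp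
      have h1 : p.1 ∈ Ideal.span {s} :=
        hst p.1 (Ideal.mem_span_singleton.mpr ⟨p.2, hp'⟩)
      obtain ⟨c, hc⟩ := Ideal.mem_span_singleton.mp h1
      have h2 : p.2 = t * c := by
        have h0 : (p.2 - t * c) * s = 0 := by
          have hx0 : s * p.2 = t * (s * c) := by rw [← hc, hp']
          linear_combination hx0
        exact sub_eq_zero.mp (hs.2 _ h0)
      refine ⟨c, ?_⟩
      simp only [hf₀, LinearMap.prod_apply, Function.prod_apply, LinearMap.lsmul_apply, smul_eq_mul]
      exact Prod.ext (by rw [hc, mul_comm]) (by rw [h2, mul_comm])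
    · rintro ⟨c, rfl⟩
      simp only [hf₀, hg₀, LinearMap.prod_apply, Function.prod_apply, LinearMap.sub_apply,
        LinearMap.smul_apply, LinearMap.fst_apply, LinearMap.snd_apply,
        LinearMap.lsmul_apply, smul_eq_mul]
      ring
  have hex2 := Module.Flat.lTensor_exact M hex
  set w : M ⊗[R] (R × R) := a ⊗ₜ ((1 : R), (0 : R)) + b ⊗ₜ ((0 : R), (1 : R)) with hwdef
  have e1 : (t • a) ⊗ₜ[R] (1 : R) = a ⊗ₜ[R] t := by
    rw [← smul_tmul', ← tmul_smul, smul_eq_mul, mul_one]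
  have e2 : (s • b) ⊗ₜ[R] (1 : R) = b ⊗ₜ[R] s := by
    rw [← smul_tmul', ← tmul_smul, smul_eq_mul, mul_one]
  have hw : (g₀.lTensor M) w = 0 := by
    simp only [hwdef, map_add, LinearMap.lTensor_tmul, hg₀, LinearMap.sub_apply,
      LinearMap.smul_apply, LinearMap.fst_apply, LinearMap.snd_apply, smul_eq_mul,
      mul_one, mul_zero, sub_zero, zero_sub]
    rw [← e1, tmul_neg, ← e2, ← sub_eq_add_neg, ← sub_tmul, h, sub_self, zero_tmul]
  obtain ⟨z, hz⟩ := (hex2 w).mp hw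
  set m₀ := TensorProduct.rid R M z with hm₀
  have hz' : m₀ ⊗ₜ[R] (1 : R) = z := by
    rw [hm₀, ← TensorProduct.rid_symm_apply]
    exact (TensorProduct.rid R M).symm_apply_apply z
  have hz2 : (f₀.lTensor M) (m₀ ⊗ₜ[R] (1 : R)) = w := by rw [hz']; exact hz
  have hz3 : (s • m₀) ⊗ₜ[R] ((1 : R), (0 : R)) + (t • m₀) ⊗ₜ[R] ((0 : R), (1 : R)) = w := by
    rw [← hz2]
    simp only [LinearMap.lTensor_tmul, hf₀, LinearMap.prod_apply, Function.prod_apply,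
      LinearMap.lsmul_apply, smul_eq_mul, mul_one]
    rw [show ((s, t) : R × R) = s • ((1 : R), (0 : R)) + t • ((0 : R), (1 : R)) by
        simp [Prod.ext_iff],
      tmul_add, tmul_smul, tmul_smul, smul_tmul', smul_tmul']
  set φ₁ : M ⊗[R] (R × R) →ₗ[R] M :=
    (TensorProduct.rid R M).toLinearMap ∘ₗ (LinearMap.fst R R R).lTensor M with hφ₁
  set φ₂ : M ⊗[R] (R × R) →ₗ[R] M :=
    (TensorProduct.rid R M).toLinearMap ∘ₗ (LinearMap.snd R R R).lTensor M with hφ₂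
  have ha := congrArg φ₁ hz3
  have hb := congrArg φ₂ hz3
  simp only [hφ₁, hφ₂, hwdef, map_add, LinearMap.comp_apply, LinearMap.lTensor_tmul,
    LinearMap.fst_apply, LinearMap.snd_apply, LinearEquiv.coe_coe, TensorProduct.rid_tmul,
    one_smul, zero_smul, add_zero, zero_add] at ha hb
  exact ⟨m₀, ha.symm, hb.symm⟩

private lemma step_pow {x y : R} (hx : x ∈ nonZeroDivisors R)
    (hy : ∀ r : R, y * r ∈ Ideal.span {x} → r ∈ Ideal.span {x}) :
    ∀ (n : ℕ) (r : R), y * r ∈ Ideal.span {x ^ n} → r ∈ Ideal.span {x ^ n} := by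
  intro n
  induction n with
  | zero =>
    intro r _
    simp only [pow_zero, Ideal.span_singleton_one]
    exact Submodule.mem_top
  | succ n ih =>
    intro r hr
    obtain ⟨c, hc⟩ := Ideal.mem_span_singleton.mp hr
    have h1 : r ∈ Ideal.span {x} :=
      hy r (Ideal.mem_span_singleton.mpr ⟨x ^ n * c, by rw [hc]; ring⟩)
    obtain ⟨r', hr'⟩ := Ideal.mem_span_singleton.mp h1
    have h2 : y * r' = x ^ n * c := by
      have h0 : (y * r' - x ^ n * c) * x = 0 := by
        have hxx : y * (x * r') = x ^ (n + 1) * c := by rw [← hr', hc]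
        linear_combination hxx
      exact sub_eq_zero.mp (hx.2 _ h0)
    obtain ⟨d, hd⟩ := Ideal.mem_span_singleton.mp (ih r' (Ideal.mem_span_singleton.mpr ⟨c, h2⟩))
    exact Ideal.mem_span_singleton.mpr ⟨d, by rw [hr', hd]; ring⟩

private lemma pow_pow {x y : R} (hx : x ∈ nonZeroDivisors R)
    (hy : ∀ r : R, y * r ∈ Ideal.span {x} → r ∈ Ideal.span {x}) :
    ∀ (k n : ℕ) (r : R), y ^ k * r ∈ Ideal.span {x ^ n} → r ∈ Ideal.span {x ^ n} := by
  intro k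
  induction k with
  | zero => intro n r hr; simpa using hr
  | succ k ih =>
    intro n r hr
    have h1 : y * (y ^ k * r) ∈ Ideal.span {x ^ n} := by
      rw [show y * (y ^ k * r) = y ^ (k + 1) * r by ring]; exact hr
    exact ih n r (step_pow hx hy n _ h1)

private lemma loc_rep {c : R} (u : LocalizedModule (Submonoid.powers c) M) :
    ∃ (a : M) (n : ℕ), u = LocalizedModule.mk a ⟨c ^ n, pow_mem (Submonoid.mem_powers c) n⟩ := by
  refine LocalizedModule.induction_on (fun m s => ?_) u
  obtain ⟨n, hn⟩ := s.2
  exact ⟨m, n, by congr 1; exact Subtype.ext hn.symm⟩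

end Aux

theorem flat_module_localization_sequence_exact
    {R : Type*} [CommRing R] (x y : R)
    (hx : x ∈ nonZeroDivisors R)
    (hy : ∀ r : R, y * r ∈ Ideal.span {x} → r ∈ Ideal.span {x})
    (M : Type*) [AddCommGroup M] [Module R M] [Module.Flat R M]
    (f : LocalizedModule (Submonoid.powers x) M →ₗ[R]
        LocalizedModule (Submonoid.powers (x * y)) M)
    (g : LocalizedModule (Submonoid.powers y) M →ₗ[R]
        LocalizedModule (Submonoid.powers (x * y)) M)
    (hf : ∀ m : M, f (LocalizedModule.mkLinearMap (Submonoid.powers x) M m) =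
        LocalizedModule.mkLinearMap (Submonoid.powers (x * y)) M m)
    (hg : ∀ m : M, g (LocalizedModule.mkLinearMap (Submonoid.powers y) M m) =
        LocalizedModule.mkLinearMap (Submonoid.powers (x * y)) M m) :
    Function.Injective
      ((LocalizedModule.mkLinearMap (Submonoid.powers x) M).prod
        (LocalizedModule.mkLinearMap (Submonoid.powers y) M)) ∧
    Function.Exact
      (⇑((LocalizedModule.mkLinearMap (Submonoid.powers x) M).prod
        (LocalizedModule.mkLinearMap (Submonoid.powers y) M)))
      (⇑(f.comp (LinearMap.fst R (LocalizedModule (Submonoid.powers x) M)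
            (LocalizedModule (Submonoid.powers y) M)) -
         g.comp (LinearMap.snd R (LocalizedModule (Submonoid.powers x) M)
            (LocalizedModule (Submonoid.powers y) M)))) := by
  constructor
  · -- injectivity
    rw [injective_iff_map_eq_zero]
    intro m hm
    have h1 : LocalizedModule.mk m (1 : Submonoid.powers x) =
        LocalizedModule.mk (0 : M) (1 : Submonoid.powers x) := by
      have := congrArg Prod.fst hm
      simp only [LinearMap.prod_apply, Function.prod_apply, LocalizedModule.mkLinearMap_apply, Prod.fst_zero] at this
      rw [this, LocalizedModule.zero_mk]
    obtain ⟨w, hw⟩ := LocalizedModule.mk_eq.mp h1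
    obtain ⟨n, hn⟩ := w.2
    simp only [one_smul, smul_zero] at hw
    rw [Submonoid.smul_def, ← hn] at hw
    exact flat_smul_cancel (pow_mem hx n) hw
  · -- exactness
    intro p
    constructor
    · intro hp
      obtain ⟨u, v⟩ := p
      obtain ⟨a, n, rfl⟩ := loc_rep u
      obtain ⟨b, k, rfl⟩ := loc_rep v
      simp only [LinearMap.sub_apply, LinearMap.comp_apply, LinearMap.fst_apply,
        LinearMap.snd_apply] at hp
      have hfg : f (LocalizedModule.mk a ⟨x ^ n, pow_mem (Submonoid.mem_powers x) n⟩) =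
          g (LocalizedModule.mk b ⟨y ^ k, pow_mem (Submonoid.mem_powers y) k⟩) := sub_eq_zero.mp hp
      have hu : (x ^ n : R) • LocalizedModule.mk a (⟨x ^ n, pow_mem (Submonoid.mem_powers x) n⟩ : Submonoid.powers x) =
          LocalizedModule.mk a 1 := by
        rw [LocalizedModule.smul'_mk,
          show (x ^ n : R) • a = (⟨x ^ n, pow_mem (Submonoid.mem_powers x) n⟩ : Submonoid.powers x) • a from rfl,
          LocalizedModule.mk_cancel]
      have hv : (y ^ k : R) • LocalizedModule.mk b (⟨y ^ k, pow_mem (Submonoid.mem_powers y) k⟩ : Submonoid.powers y) =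
          LocalizedModule.mk b 1 := by
        rw [LocalizedModule.smul'_mk,
          show (y ^ k : R) • b = (⟨y ^ k, pow_mem (Submonoid.mem_powers y) k⟩ : Submonoid.powers y) • b from rfl,
          LocalizedModule.mk_cancel]
      have h2 : (x ^ n : R) • f (LocalizedModule.mk a ⟨x ^ n, pow_mem (Submonoid.mem_powers x) n⟩) =
          LocalizedModule.mk a (1 : Submonoid.powers (x * y)) := by
        rw [← map_smul, hu]
        have := hf a
        simpa only [LocalizedModule.mkLinearMap_apply] using this
      have h3 : (y ^ k : R) • g (LocalizedModule.mk b ⟨y ^ k, pow_mem (Submonoid.mem_powers y) k⟩) =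
          LocalizedModule.mk b (1 : Submonoid.powers (x * y)) := by
        rw [← map_smul, hv]
        have := hg b
        simpa only [LocalizedModule.mkLinearMap_apply] using this
      have h4 : LocalizedModule.mk ((y ^ k : R) • a) (1 : Submonoid.powers (x * y)) =
          LocalizedModule.mk ((x ^ n : R) • b) (1 : Submonoid.powers (x * y)) := by
        rw [← LocalizedModule.smul'_mk, ← LocalizedModule.smul'_mk, ← h2, ← h3, hfg,
          smul_comm]
      obtain ⟨w, hw⟩ := LocalizedModule.mk_eq.mp h4
      obtain ⟨N, hN⟩ := w.2
      simp only [one_smul] at hw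
      rw [Submonoid.smul_def, Submonoid.smul_def, ← hN, smul_smul, smul_smul] at hw
      -- hw : ((x*y)^N * y^k) • a = ((x*y)^N * x^n) • b
      have hkey : (y ^ (N + n + k) : R) • ((x ^ (N + k) : R) • a) =
          (x ^ (N + n + k) : R) • ((y ^ (N + n) : R) • b) := by
        have h5 := congrArg (fun z => (x ^ k * y ^ n : R) • z) hw
        simp only [smul_smul] at h5 ⊢
        rw [show y ^ (N + n + k) * x ^ (N + k) = x ^ k * y ^ n * ((x * y) ^ N * y ^ k) by ring,
          show x ^ (N + n + k) * y ^ (N + n) = x ^ k * y ^ n * ((x * y) ^ N * x ^ n) by ring]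
        exact h5
      obtain ⟨m₀, hm1, hm2⟩ := flat_key (pow_mem hx (N + n + k))
        (fun r hr => pow_pow hx hy (N + n + k) (N + n + k) r hr) hkey
      refine ⟨m₀, ?_⟩
      simp only [LinearMap.prod_apply, Function.prod_apply, LocalizedModule.mkLinearMap_apply]
      refine Prod.ext ?_ ?_
      · refine LocalizedModule.mk_eq.mpr ⟨⟨x ^ (N + k), pow_mem (Submonoid.mem_powers x) (N + k)⟩, ?_⟩
        simp only [one_smul, Submonoid.smul_def, smul_smul]
        rw [show (x ^ (N + k) : R) * x ^ n = x ^ (N + n + k) by ring, ← hm1]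
      · refine LocalizedModule.mk_eq.mpr ⟨⟨y ^ (N + n), pow_mem (Submonoid.mem_powers y) (N + n)⟩, ?_⟩
        simp only [one_smul, Submonoid.smul_def, smul_smul]
        rw [show (y ^ (N + n) : R) * y ^ k = y ^ (N + n + k) by ring, ← hm2]
    · rintro ⟨m, rfl⟩
      simp only [LinearMap.sub_apply, LinearMap.comp_apply, LinearMap.fst_apply,
        LinearMap.snd_apply, LinearMap.prod_apply, Function.prod_apply]
      rw [hf m, hg m, sub_self]
end

section
/- Let R be a Noetherian local ring whose maximal ideal is generated by a regular sequence of length two (so R is a two-dimensional regular local ring). Then for every finitely generated R-module M, the double dual M** = Hom_R(Hom_R(M, R), R) is a finitely generated free R-module. -/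
open IsLocalRing Submodule

section DVR
variable {R : Type*} [CommRing R] [IsNoetherianRing R] [IsLocalRing R]
  (x y : R)

/-- The quotient `R/(x)` is a DVR (in particular a PID domain). -/
theorem quot_dvr
    (hspan : IsLocalRing.maximalIdeal R = Ideal.span {x, y})
    (hy : ∀ r : R, y * r ∈ Ideal.span {x} → r ∈ Ideal.span {x}) :
    ∃ (_ : IsDomain (R ⧸ Ideal.span {x})),
      IsPrincipalIdealRing (R ⧸ Ideal.span {x}) := by
  set I := Ideal.span {x} with hI
  have hxm : x ∈ maximalIdeal R := hspan ▸ Ideal.subset_span (by simp)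
  have hym : y ∈ maximalIdeal R := hspan ▸ Ideal.subset_span (by simp)
  have hInetop : I ≠ ⊤ := fun h =>
    (IsLocalRing.mem_maximalIdeal x).mp hxm (Ideal.span_singleton_eq_top.mp h)
  haveI : Nontrivial (R ⧸ I) := Ideal.Quotient.nontrivial_iff.mpr hInetop
  haveI : IsLocalRing (R ⧸ I) :=
    IsLocalRing.of_surjective' (Ideal.Quotient.mk I) Ideal.Quotient.mk_surjective
  set Y : R ⧸ I := Ideal.Quotient.mk I y with hY
  -- y nonzerodivisor mod x, nonzero, nonunit
  have hYnzd : ∀ b : R ⧸ I, Y * b = 0 → b = 0 := by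
    intro b hb
    obtain ⟨b, rfl⟩ := Ideal.Quotient.mk_surjective b
    rw [hY, ← map_mul, Ideal.Quotient.eq_zero_iff_mem] at hb
    exact Ideal.Quotient.eq_zero_iff_mem.mpr (hy b hb)
  have hYne : Y ≠ 0 := by
    intro h
    rw [hY, Ideal.Quotient.eq_zero_iff_mem] at h
    exact (IsLocalRing.mem_maximalIdeal x).mp hxm
      (Ideal.span_singleton_eq_top.mp (Ideal.eq_top_of_isUnit_mem _ (hy 1 (by simpa using h))
        isUnit_one))
  have hYnu : ¬ IsUnit Y := by
    intro h
    obtain ⟨z, hz⟩ := isUnit_iff_exists_inv.mp h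
    obtain ⟨z, rfl⟩ := Ideal.Quotient.mk_surjective z
    rw [hY, ← map_mul, ← map_one (Ideal.Quotient.mk I), Ideal.Quotient.eq] at hz
    obtain ⟨w, hw⟩ := Ideal.mem_span_singleton'.mp hz
    have h1 : (1 : R) ∈ maximalIdeal R := by
      have h2 : (1 : R) = y * z - w * x := by linear_combination hw
      rw [h2]
      exact sub_mem (Ideal.mul_mem_right z _ hym) (Ideal.mul_mem_left _ w hxm)
    exact (IsLocalRing.maximalIdeal.isMaximal R).ne_top (Ideal.eq_top_of_isUnit_mem _ h1 isUnit_one)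
  -- maximal ideal of R ⧸ I is span {Y}: every nonunit is a multiple of Y
  have hnonunit : ∀ b : R ⧸ I, ¬ IsUnit b → b ∈ Ideal.span {Y} := by
    intro b hb
    obtain ⟨b, rfl⟩ := Ideal.Quotient.mk_surjective b
    have hbm : b ∈ maximalIdeal R := by
      by_contra hbu
      exact hb (IsUnit.map _ (not_not.mp fun h => hbu ((IsLocalRing.mem_maximalIdeal b).mpr h)))
    rw [hspan, Ideal.span_insert, Submodule.mem_sup] at hbm
    obtain ⟨a, ha, c, hc, rfl⟩ := hbm
    obtain ⟨d, hd⟩ := Ideal.mem_span_singleton'.mp hc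
    have : Ideal.Quotient.mk I a = 0 := Ideal.Quotient.eq_zero_iff_mem.mpr ha
    rw [map_add, this, zero_add, ← hd, map_mul]
    exact Ideal.mem_span_singleton'.mpr ⟨_, rfl⟩
  -- Krull intersection
  have hKrull : (⨅ n : ℕ, Ideal.span {Y} ^ n) = ⊥ :=
    Ideal.iInf_pow_eq_bot_of_isLocalRing _
      (fun h => hYnu (Ideal.span_singleton_eq_top.mp h))
  -- every nonzero element is a unit times a power of Y
  have hfac : ∀ b : R ⧸ I, b ≠ 0 → ∃ (n : ℕ) (u : R ⧸ I), IsUnit u ∧ b = Y ^ n * u := by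
    intro b hb
    have hex : ∃ n, b ∉ Ideal.span {Y} ^ n := by
      by_contra h
      push_neg at h
      exact hb (by simpa using (hKrull ▸ Submodule.mem_iInf _ |>.mpr h : b ∈ (⊥ : Ideal _)))
    classical
    have hn0 : b ∉ Ideal.span {Y} ^ (Nat.find hex) := Nat.find_spec hex
    have hn0pos : Nat.find hex ≠ 0 := by
      intro h
      apply hn0
      rw [h, pow_zero, Ideal.one_eq_top]
      trivial
    obtain ⟨k, hkk⟩ : ∃ k, Nat.find hex = k + 1 :=
      ⟨Nat.find hex - 1, (Nat.succ_pred_eq_of_ne_zero hn0pos).symm⟩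
    have hk : b ∈ Ideal.span {Y} ^ k :=
      not_not.mp (Nat.find_min hex (by omega))
    rw [Ideal.span_singleton_pow, Ideal.mem_span_singleton'] at hk
    obtain ⟨c, hc⟩ := hk
    have hcu : IsUnit c := by
      by_contra hcu
      obtain ⟨d, hd⟩ := Ideal.mem_span_singleton'.mp (hnonunit c hcu)
      apply hn0
      rw [hkk, Ideal.span_singleton_pow, Ideal.mem_span_singleton']
      exact ⟨d, by rw [← hc, ← hd]; ring⟩
    exact ⟨k, c, hcu, by rw [← hc]; ring⟩
  -- domain
  haveI : NoZeroDivisors (R ⧸ I) := ⟨by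
    intro a b hab
    by_cases ha : a = 0
    · exact Or.inl ha
    · right
      obtain ⟨n, u, hu, rfl⟩ := hfac a ha
      have hY0 : ∀ m : ℕ, ∀ c : R ⧸ I, Y ^ m * c = 0 → c = 0 := by
        intro m
        induction m with
        | zero => intro c h; simpa using h
        | succ m ih =>
          intro c h
          exact hYnzd c (ih _ (by rw [← h]; ring))
      have hub : u * b = 0 := hY0 n _ (by rw [← hab]; ring)
      obtain ⟨v, hv⟩ := isUnit_iff_exists_inv.mp hu
      calc b = (u * v) * b := by rw [hv, one_mul]
        _ = v * (u * b) := by ring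
        _ = 0 := by rw [hub, mul_zero]⟩
  have hdom : IsDomain (R ⧸ I) := NoZeroDivisors.to_isDomain _
  haveI := hdom
  have hirr : Irreducible Y := by
    constructor
    · exact hYnu
    · intro a b hab
      have ha : a ≠ 0 := fun h => hYne (by rw [hab, h, zero_mul])
      have hb : b ≠ 0 := fun h => hYne (by rw [hab, h, mul_zero])
      obtain ⟨n, u, hu, rfl⟩ := hfac a ha
      obtain ⟨m, v, hv, rfl⟩ := hfac b hb
      match n, m with
      | 0, _ => exact Or.inl (by simpa using hu)
      | _ + 1, 0 => exact Or.inr (by simpa using hv)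
      | n' + 1, m' + 1 =>
        exfalso
        have h0 : Y * (1 - Y * (Y ^ (n' + m') * (u * v))) = 0 := by
          linear_combination hab
        have h1 : (1 : R ⧸ I) - Y * (Y ^ (n' + m') * (u * v)) = 0 := hYnzd _ h0
        have h2 : Y * (Y ^ (n' + m') * (u * v)) = 1 := by linear_combination -h1
        exact hYnu (IsUnit.of_mul_eq_one _ h2)
  have hdvr : IsDiscreteValuationRing (R ⧸ I) :=
    IsDiscreteValuationRing.ofHasUnitMulPowIrreducibleFactorization
      ⟨Y, hirr, fun {b} hb => by
        obtain ⟨n, u, hu, rfl⟩ := hfac b hb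
        exact ⟨n, hu.unit, rfl⟩⟩
  exact ⟨hdom, hdvr.toIsPrincipalIdealRing⟩

end DVR

section Lift
variable {R : Type*} [CommRing R] [IsNoetherianRing R] [IsLocalRing R]

/-- If `x` lies in the maximal ideal, acts injectively on a finite module `K`, and
`K/xK` is free over `R/(x)`, then `K` is free over `R`. -/
theorem free_of_quotient_free (x : R) (hxm : x ∈ IsLocalRing.maximalIdeal R)
    {K : Type*} [AddCommGroup K] [Module R K] [Module.Finite R K]
    (hreg : ∀ k : K, x • k = 0 → k = 0)
    (hfree : Module.Free (R ⧸ Ideal.span {x})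
      (K ⧸ (Ideal.span {x} • ⊤ : Submodule R K))) :
    Module.Free R K := by
  classical
  set I : Ideal R := Ideal.span {x} with hI
  set Q := K ⧸ (I • ⊤ : Submodule R K) with hQ
  set Rb := R ⧸ I with hRb
  letI : Module Rb Q := inferInstance
  have smul_eq : ∀ (r : R) (q : Q), (Ideal.Quotient.mk I r) • q = r • q := by
    intro r q
    obtain ⟨k, rfl⟩ := Submodule.Quotient.mk_surjective _ q
    rfl
  haveI : IsScalarTower R Rb Q :=
    IsScalarTower.of_algebraMap_smul fun r q => smul_eq r q
  haveI : Module.Finite R Q := Module.Finite.quotient R _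
  haveI : Module.Finite Rb Q := Module.Finite.of_restrictScalars_finite R Rb Q
  -- a basis of Q over Rb
  let b := hfree.chooseBasis
  set ζ := Module.Free.ChooseBasisIndex Rb Q with hζ
  haveI : Fintype ζ := Module.Free.ChooseBasisIndex.fintype Rb Q
  -- lift the basis vectors
  choose v hv using fun i : ζ => Submodule.Quotient.mk_surjective
    (I • ⊤ : Submodule R K) (b i)
  -- the induced map (ζ → R) → K
  let L : (ζ → R) →ₗ[R] K := Fintype.linearCombination R v
  have hLapp : ∀ c : ζ → R, L c = ∑ i, c i • v i := fun c => rfl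
  have hmkL : ∀ c : ζ → R, Submodule.Quotient.mk (p := (I • ⊤ : Submodule R K)) (L c)
      = ∑ i, (Ideal.Quotient.mk I (c i)) • b i := by
    intro c
    rw [hLapp]
    rw [← Submodule.mkQ_apply, map_sum]
    refine Finset.sum_congr rfl fun i _ => ?_
    rw [Submodule.mkQ_apply, Submodule.Quotient.mk_smul, smul_eq, hv]
  -- surjectivity via Nakayama
  have hsurj : Function.Surjective L := by
    have hsp : Submodule.span R (Set.range v) ⊔ I • ⊤ = ⊤ := by
      rw [eq_top_iff]
      intro k _
      set q : Q := Submodule.Quotient.mk k with hq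
      choose c hc using fun i : ζ => Ideal.Quotient.mk_surjective (I := I) (b.repr q i)
      have hmk : Submodule.Quotient.mk (p := (I • ⊤ : Submodule R K)) (L c) = q := by
        rw [hmkL]
        simp_rw [hc]
        exact b.sum_repr q
      have hsub : L c - k ∈ (I • ⊤ : Submodule R K) := (Submodule.Quotient.eq _).mp hmk
      refine Submodule.mem_sup.mpr ⟨L c, ?_, -(L c - k), neg_mem hsub, by abel⟩
      rw [hLapp]
      exact Submodule.sum_mem _ fun i _ =>
        Submodule.smul_mem _ _ (Submodule.subset_span ⟨i, rfl⟩)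
    have hj : I ≤ Ideal.jacobson ⊥ := by
      rw [IsLocalRing.jacobson_eq_maximalIdeal ⊥ bot_ne_top, hI]
      exact Ideal.span_le.mpr (Set.singleton_subset_iff.mpr hxm)
    have hs2 : (⊤ : Submodule R K) ≤ Submodule.span R (Set.range v) :=
      Submodule.le_of_le_smul_of_le_jacobson_bot
        (IsNoetherian.noetherian (⊤ : Submodule R K)) hj hsp.ge
    intro k
    have hk : k ∈ Submodule.span R (Set.range v) := hs2 trivial
    rw [← Fintype.range_linearCombination R v] at hk
    exact hk
  -- injectivity
  have hinj : Function.Injective L := by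
    rw [← LinearMap.ker_eq_bot]
    have hfg : (LinearMap.ker L).FG := IsNoetherian.noetherian _
    have hle : LinearMap.ker L ≤ I • LinearMap.ker L := by
      intro c hc
      have hc0 : L c = 0 := hc
      -- reduce mod x : coefficients lie in I
      have hcI : ∀ i, c i ∈ I := by
        intro i
        have h0 : (0 : Q) = ∑ j, (Ideal.Quotient.mk I (c j)) • b j := by
          rw [← hmkL, hc0, Submodule.Quotient.mk_zero]
        have := Fintype.linearIndependent_iff.mp b.linearIndependent
          (fun j => Ideal.Quotient.mk I (c j)) h0.symm i
        rwa [← Ideal.Quotient.eq_zero_iff_mem]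
      choose d hd using fun i => Ideal.mem_span_singleton'.mp (hcI i)
      have hcd : c = x • d := by
        funext i
        simp only [Pi.smul_apply, smul_eq_mul]
        rw [← hd i, mul_comm]
      have hdK : d ∈ LinearMap.ker L := by
        have : x • L d = 0 := by
          rw [← map_smul, ← hcd, hc0]
        exact LinearMap.mem_ker.mpr (hreg _ this)
      rw [hcd]
      exact Submodule.smul_mem_smul (Ideal.mem_span_singleton_self x) hdK
    have hj : I ≤ Ideal.jacobson ⊥ := by
      rw [IsLocalRing.jacobson_eq_maximalIdeal ⊥ bot_ne_top, hI]
      exact Ideal.span_le.mpr (Set.singleton_subset_iff.mpr hxm)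
    exact Submodule.eq_bot_of_le_smul_of_le_jacobson_bot I _ hfg hle hj
  exact Module.Free.of_equiv (LinearEquiv.ofBijective L ⟨hinj, hsurj⟩)

end Lift

section Ker
variable {R : Type*} [CommRing R] [IsNoetherianRing R] [IsLocalRing R]

theorem ker_free_pi (x y : R)
    (hspan : IsLocalRing.maximalIdeal R = Ideal.span {x, y})
    (hx : x ∈ nonZeroDivisors R)
    (hy : ∀ r : R, y * r ∈ Ideal.span {x} → r ∈ Ideal.span {x})
    {ι κ : Type*} [Fintype ι] [Fintype κ]
    (φ : (ι → R) →ₗ[R] (κ → R)) :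
    Module.Free R (LinearMap.ker φ) := by
  classical
  set I : Ideal R := Ideal.span {x} with hI
  have hxm : x ∈ maximalIdeal R := hspan ▸ Ideal.subset_span (by simp)
  set K : Submodule R (ι → R) := LinearMap.ker φ with hK
  haveI : Module.Finite R ↥K := Module.Finite.iff_fg.mpr (IsNoetherian.noetherian K)
  have hregG : ∀ g : ι → R, x • g = 0 → g = 0 := by
    intro g h
    funext i
    have h1 : g i * x = 0 := by
      have := congrFun h i
      simpa [mul_comm] using this
    exact mem_nonZeroDivisors_iff_right.mp hx _ h1
  have hregF : ∀ g : κ → R, x • g = 0 → g = 0 := by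
    intro g h
    funext i
    have h1 : g i * x = 0 := by
      have := congrFun h i
      simpa [mul_comm] using this
    exact mem_nonZeroDivisors_iff_right.mp hx _ h1
  have hregK : ∀ k : ↥K, x • k = 0 → k = 0 := by
    intro k h
    exact Subtype.ext (hregG k.1 (by exact congrArg Subtype.val h))
  refine free_of_quotient_free x hxm hregK ?_
  -- the quotient K/xK is finite torsion-free over the DVR R/(x)
  obtain ⟨hdom, hpid⟩ := quot_dvr x y hspan hy
  set Rb := R ⧸ I with hRb
  set Q := (↥K) ⧸ (I • ⊤ : Submodule R ↥K) with hQ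
  letI : IsDomain Rb := hdom
  letI : IsPrincipalIdealRing Rb := hpid
  have smul_eq : ∀ (r : R) (q : Q), (Ideal.Quotient.mk I r) • q = r • q := by
    intro r q
    obtain ⟨k, rfl⟩ := Submodule.Quotient.mk_surjective _ q
    rfl
  haveI : IsScalarTower R Rb Q :=
    IsScalarTower.of_algebraMap_smul fun r q => smul_eq r q
  haveI : Module.Finite R Q := Module.Finite.quotient R _
  haveI : Module.Finite Rb Q := Module.Finite.of_restrictScalars_finite R Rb Q
  -- key injectivity: an element of K all of whose coordinates lie in (x) is in xK
  have claimA : ∀ k : ↥K, (∀ i, (k : ι → R) i ∈ I) → k ∈ (I • ⊤ : Submodule R ↥K) := by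
    intro k hk
    choose c hc using fun i => Ideal.mem_span_singleton'.mp (hk i)
    have hkc : (k : ι → R) = x • c := by
      funext i
      simp only [Pi.smul_apply, smul_eq_mul]
      rw [← hc i, mul_comm]
    have hcK : c ∈ K := by
      have h1 : x • φ c = 0 := by
        rw [← map_smul, ← hkc]
        exact k.2
      exact LinearMap.mem_ker.mpr (hregF _ h1)
    have : k = x • (⟨c, hcK⟩ : ↥K) := Subtype.ext (by simpa using hkc)
    rw [this]
    exact Submodule.smul_mem_smul (Ideal.mem_span_singleton_self x) trivial
  have hcoord : ∀ m ∈ (I • ⊤ : Submodule R ↥K), ∀ i, (m : ι → R) i ∈ I := by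
    intro m hm
    refine Submodule.smul_induction_on hm ?_ ?_
    · intro r hr n _ i
      exact Ideal.mul_mem_right _ _ hr
    · intro m₁ m₂ h₁ h₂ i
      exact add_mem (h₁ i) (h₂ i)
  haveI : NoZeroSMulDivisors Rb Q := by
    constructor
    intro rb q h
    obtain ⟨r, rfl⟩ := Ideal.Quotient.mk_surjective rb
    obtain ⟨k, rfl⟩ := Submodule.Quotient.mk_surjective _ q
    by_cases hr : Ideal.Quotient.mk I r = 0
    · exact Or.inl hr
    · right
      rw [smul_eq, ← Submodule.Quotient.mk_smul, Submodule.Quotient.mk_eq_zero] at h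
      have hki : ∀ i, (k : ι → R) i ∈ I := by
        intro i
        have h1 : r * (k : ι → R) i ∈ I := by
          have := hcoord _ h i
          simpa using this
        have h2 : Ideal.Quotient.mk I r * Ideal.Quotient.mk I ((k : ι → R) i) = 0 := by
          rw [← map_mul, Ideal.Quotient.eq_zero_iff_mem]
          exact h1
        rcases mul_eq_zero.mp h2 with h3 | h3
        · exact absurd h3 hr
        · exact Ideal.Quotient.eq_zero_iff_mem.mp h3
      rw [Submodule.Quotient.mk_eq_zero]
      exact claimA k hki
  exact Module.free_of_finite_type_torsion_free'

end Ker

section KerAbs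
variable {R : Type*} [CommRing R] [IsNoetherianRing R] [IsLocalRing R]

theorem ker_free (x y : R)
    (hspan : IsLocalRing.maximalIdeal R = Ideal.span {x, y})
    (hx : x ∈ nonZeroDivisors R)
    (hy : ∀ r : R, y * r ∈ Ideal.span {x} → r ∈ Ideal.span {x})
    {G F : Type*} [AddCommGroup G] [Module R G] [Module.Free R G] [Module.Finite R G]
    [AddCommGroup F] [Module R F] [Module.Free R F] [Module.Finite R F]
    (φ : G →ₗ[R] F) :
    Module.Free R (LinearMap.ker φ) := by
  classical
  let bG := Module.Free.chooseBasis R G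
  let bF := Module.Free.chooseBasis R F
  let eG := bG.equivFun
  let eF := bF.equivFun
  let φ' := eF.toLinearMap ∘ₗ φ ∘ₗ eG.symm.toLinearMap
  have h1 : LinearMap.ker φ' = (LinearMap.ker φ).map eG.toLinearMap := by
    ext c
    simp only [LinearMap.mem_ker, LinearMap.coe_comp, Function.comp_apply,
      LinearEquiv.coe_coe, Submodule.mem_map, φ']
    constructor
    · intro h
      exact ⟨eG.symm c, by simpa using h, by simp⟩
    · rintro ⟨g, hg, rfl⟩
      simp [hg]
  have e2 : (↥(LinearMap.ker φ)) ≃ₗ[R] ↥(LinearMap.ker φ') :=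
    (eG.submoduleMap (LinearMap.ker φ)).trans (LinearEquiv.ofEq _ _ h1.symm)
  have hfree' : Module.Free R (LinearMap.ker φ') := ker_free_pi x y hspan hx hy φ'
  exact Module.Free.of_equiv e2.symm

end KerAbs

theorem double_dual_free_of_regular_dimension_two'
    {R : Type*} [CommRing R] [IsNoetherianRing R] [IsLocalRing R]
    (x y : R)
    (hspan : IsLocalRing.maximalIdeal R = Ideal.span {x, y})
    (hx : x ∈ nonZeroDivisors R)
    (hy : ∀ r : R, y * r ∈ Ideal.span {x} → r ∈ Ideal.span {x})
    (M : Type*) [AddCommGroup M] [Module R M] [Module.Finite R M] :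
    Module.Free R (Module.Dual R (Module.Dual R M)) ∧
    Module.Finite R (Module.Dual R (Module.Dual R M)) := by
  classical
  set D1 := Module.Dual R M with hD1
  -- the dual of a finite module is finite
  have hfinD1 : Module.Finite R D1 := by
    obtain ⟨n, π0, hπ0⟩ := Module.Finite.exists_fin' R M
    have hinj : Function.Injective π0.dualMap := by
      intro f g h
      apply LinearMap.ext
      intro m
      obtain ⟨v, rfl⟩ := hπ0 m
      exact congrArg (fun h => h v) h
    exact Module.Finite.of_injective π0.dualMap hinj
  haveI := hfinD1
  obtain ⟨n, π, hπ⟩ := Module.Finite.exists_fin' R D1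
  haveI : Module.Finite R ↥(LinearMap.ker π) :=
    Module.Finite.iff_fg.mpr (IsNoetherian.noetherian _)
  obtain ⟨a, ρ0, hρ0⟩ := Module.Finite.exists_fin' R ↥(LinearMap.ker π)
  let ρ : (Fin a → R) →ₗ[R] (Fin n → R) := (LinearMap.ker π).subtype ∘ₗ ρ0
  have hrange : LinearMap.range ρ = LinearMap.ker π := by
    rw [LinearMap.range_comp, LinearMap.range_eq_top.mpr hρ0, Submodule.map_top,
      Submodule.range_subtype]
  -- Dual D1 is isomorphic to the kernel of the dual of ρ
  have hcod : ∀ l : Module.Dual R D1, π.dualMap l ∈ LinearMap.ker ρ.dualMap := by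
    intro l
    rw [LinearMap.mem_ker]
    apply LinearMap.ext
    intro v
    have hv : ρ v ∈ LinearMap.ker π := hrange ▸ LinearMap.mem_range_self ρ v
    simp only [LinearMap.dualMap_apply, LinearMap.zero_apply]
    rw [LinearMap.mem_ker.mp hv, map_zero]
  let e : Module.Dual R D1 →ₗ[R] ↥(LinearMap.ker ρ.dualMap) :=
    LinearMap.codRestrict _ π.dualMap hcod
  have hinj : Function.Injective e := by
    intro f g h
    apply LinearMap.ext
    intro m
    obtain ⟨v, rfl⟩ := hπ m
    have := congrArg (fun z : ↥(LinearMap.ker ρ.dualMap) =>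
      (z : Module.Dual R (Fin n → R)) v) h
    exact this
  have hsurj : Function.Surjective e := by
    rintro ⟨μ, hμ⟩
    have hle : LinearMap.ker π ≤ LinearMap.ker μ := by
      rw [← hrange]
      rintro _ ⟨v, rfl⟩
      have := congrArg (fun z => (z : Module.Dual R (Fin a → R)) v) (LinearMap.mem_ker.mp hμ)
      exact this
    let q := LinearMap.quotKerEquivOfSurjective π hπ
    let lam : D1 →ₗ[R] R :=
      ((LinearMap.ker π).liftQ μ hle) ∘ₗ q.symm.toLinearMap
    refine ⟨lam, Subtype.ext ?_⟩
    apply LinearMap.ext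
    intro v
    have hq : q (Submodule.Quotient.mk v) = π v := rfl
    have hq' : q.symm (π v) = Submodule.Quotient.mk v := by
      rw [← hq, LinearEquiv.symm_apply_apply]
    show lam (π v) = μ v
    simp only [lam, LinearMap.coe_comp, Function.comp_apply, LinearEquiv.coe_coe, hq']
    exact Submodule.liftQ_apply _ _ _
  have equiv : Module.Dual R D1 ≃ₗ[R] ↥(LinearMap.ker ρ.dualMap) :=
    LinearEquiv.ofBijective e ⟨hinj, hsurj⟩
  have hfree : Module.Free R ↥(LinearMap.ker ρ.dualMap) :=
    ker_free x y hspan hx hy ρ.dualMap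
  have hfin : Module.Finite R ↥(LinearMap.ker ρ.dualMap) :=
    Module.Finite.iff_fg.mpr (IsNoetherian.noetherian _)
  exact ⟨Module.Free.of_equiv equiv.symm, Module.Finite.equiv equiv.symm⟩


/-!
Let `R` be a Noetherian local ring whose maximal ideal is generated by a regular sequence
`(x, y)` of length two (so `R` is a two-dimensional regular local ring).  Then for every
finitely generated `R`-module `M`, the double dual `M** = Hom_R(Hom_R(M, R), R)` is a
finitely generated free `R`-module.
-/

theorem double_dual_free_of_regular_dimension_two
    {R : Type*} [CommRing R] [IsNoetherianRing R] [IsLocalRing R]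
    (x y : R)
    (hspan : IsLocalRing.maximalIdeal R = Ideal.span {x, y})
    (hx : x ∈ nonZeroDivisors R)
    (hy : ∀ r : R, y * r ∈ Ideal.span {x} → r ∈ Ideal.span {x})
    (M : Type*) [AddCommGroup M] [Module R M] [Module.Finite R M] :
    Module.Free R (Module.Dual R (Module.Dual R M)) ∧
    Module.Finite R (Module.Dual R (Module.Dual R M)) := by
  exact double_dual_free_of_regular_dimension_two' x y hspan hx hy M
end

section
/- Let R be a DVR with uniformizer π and let n ≥ 1 be an integer. The kernel of the R-algebra homomorphism R[s,t] → R[t,t⁻¹] determined by s ↦ π·t^{−n} and t ↦ t is the principal ideal generated by s·t^n − π. Consequently the induced map identifies R[s,t]/(s t^n − π) with the R-subalgebra R[t, π t^{−n}] of R[t,t⁻¹]. -/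
/-!
Let `R` be a DVR with uniformizer `π` and `n ≥ 1`.  The kernel of the `R`-algebra map
`R[s,t] → R[t,t⁻¹]` determined by `s ↦ π·t⁻ⁿ`, `t ↦ t` is the principal ideal generated
by `s·tⁿ − π`; consequently the induced map identifies `R[s,t]/(s·tⁿ − π)` with the
`R`-subalgebra `R[t, π·t⁻ⁿ]` of the Laurent polynomials.

Here `R[s,t]` is `MvPolynomial (Fin 2) R` with `s = X 0`, `t = X 1`, and the map is
`MvPolynomial.aeval ![MvPolynomial.C π * T (-n), T 1]`.
-/

open MvPolynomial LaurentPolynomial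

/-- `X 1` is prime in `R[s,t]`. -/
private lemma prime_X1 {R : Type*} [CommRing R] [IsDomain R] :
    Prime (X 1 : MvPolynomial (Fin 2) R) := by
  let e := (renameEquiv R (Equiv.swap (0 : Fin 2) 1)).trans (MvPolynomial.finSuccEquiv R 1)
  rw [← MulEquiv.prime_iff e.toMulEquiv]
  have he : e.toMulEquiv (X 1) = Polynomial.X := by
    show e (X 1) = Polynomial.X
    simp [e, renameEquiv_apply, rename_X, Equiv.swap_apply_right,
      MvPolynomial.finSuccEquiv_X_zero]
  rw [he]
  exact Polynomial.prime_X

/-- Normal form modulo `(s tⁿ - π)`: every `p` becomes a polynomial in `t` after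
multiplying by a suitable power of `t`. -/
private lemma auxA {R : Type*} [CommRing R] (π : R) (n : ℕ) (p : MvPolynomial (Fin 2) R) :
    ∃ (k : ℕ) (Q : Polynomial R),
      (X 1 : MvPolynomial (Fin 2) R) ^ k * p
          - Polynomial.aeval (X 1 : MvPolynomial (Fin 2) R) Q ∈
        Ideal.span {(X 0 : MvPolynomial (Fin 2) R) * X 1 ^ n - MvPolynomial.C π} := by
  induction p using MvPolynomial.induction_on with
  | C a =>
      refine ⟨0, Polynomial.C a, ?_⟩
      simp [algebraMap_eq]
  | add p q hp hq =>
      obtain ⟨k1, Q1, h1⟩ := hp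
      obtain ⟨k2, Q2, h2⟩ := hq
      refine ⟨k1 + k2, Polynomial.X ^ k2 * Q1 + Polynomial.X ^ k1 * Q2, ?_⟩
      have key : (X 1 : MvPolynomial (Fin 2) R) ^ (k1 + k2) * (p + q)
          - Polynomial.aeval (X 1 : MvPolynomial (Fin 2) R)
              (Polynomial.X ^ k2 * Q1 + Polynomial.X ^ k1 * Q2)
          = X 1 ^ k2 * (X 1 ^ k1 * p - Polynomial.aeval (X 1) Q1)
            + X 1 ^ k1 * (X 1 ^ k2 * q - Polynomial.aeval (X 1) Q2) := by
        simp only [map_add, map_mul, map_pow, Polynomial.aeval_X, pow_add]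
        ring
      rw [key]
      exact Ideal.add_mem _ (Ideal.mul_mem_left _ _ h1) (Ideal.mul_mem_left _ _ h2)
  | mul_X p i hp =>
      obtain ⟨k, Q, h⟩ := hp
      fin_cases i
      · refine ⟨k + n, Polynomial.C π * Q, ?_⟩
        have key : (X 1 : MvPolynomial (Fin 2) R) ^ (k + n) * (p * X 0)
            - Polynomial.aeval (X 1 : MvPolynomial (Fin 2) R) (Polynomial.C π * Q)
            = (X 0 * X 1 ^ n) * (X 1 ^ k * p - Polynomial.aeval (X 1) Q)
              + Polynomial.aeval (X 1 : MvPolynomial (Fin 2) R) Q * (X 0 * X 1 ^ n - MvPolynomial.C π) := by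
          simp only [map_mul, Polynomial.aeval_C, algebraMap_eq, pow_add]
          ring
        show (X 1 : MvPolynomial (Fin 2) R) ^ (k + n) * (p * X 0)
            - Polynomial.aeval (X 1 : MvPolynomial (Fin 2) R) (Polynomial.C π * Q) ∈
          Ideal.span {(X 0 : MvPolynomial (Fin 2) R) * X 1 ^ n - MvPolynomial.C π}
        rw [key]
        exact Ideal.add_mem _ (Ideal.mul_mem_left _ _ h)
          (Ideal.mul_mem_left _ _ (Ideal.subset_span (Set.mem_singleton _)))
      · refine ⟨k, Polynomial.X * Q, ?_⟩
        have key : (X 1 : MvPolynomial (Fin 2) R) ^ k * (p * X 1)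
            - Polynomial.aeval (X 1 : MvPolynomial (Fin 2) R) (Polynomial.X * Q)
            = X 1 * (X 1 ^ k * p - Polynomial.aeval (X 1) Q) := by
          simp only [map_mul, Polynomial.aeval_X]
          ring
        show (X 1 : MvPolynomial (Fin 2) R) ^ k * (p * X 1)
            - Polynomial.aeval (X 1 : MvPolynomial (Fin 2) R) (Polynomial.X * Q) ∈
          Ideal.span {(X 0 : MvPolynomial (Fin 2) R) * X 1 ^ n - MvPolynomial.C π}
        rw [key]
        exact Ideal.mul_mem_left _ _ h

/-- `t` is a nonzerodivisor modulo `(s tⁿ - π)`. -/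
private lemma auxB {R : Type*} [CommRing R] [IsDomain R] (π : R) (hπ : π ≠ 0) (n : ℕ)
    (hn : 1 ≤ n) (k : ℕ) :
    ∀ p : MvPolynomial (Fin 2) R,
      (X 1 : MvPolynomial (Fin 2) R) ^ k * p ∈
        Ideal.span {(X 0 : MvPolynomial (Fin 2) R) * X 1 ^ n - MvPolynomial.C π} →
      p ∈ Ideal.span {(X 0 : MvPolynomial (Fin 2) R) * X 1 ^ n - MvPolynomial.C π} := by
  induction k with
  | zero => intro p h; simpa using h
  | succ k ih =>
      intro p h
      have h1 : (X 1 : MvPolynomial (Fin 2) R) * p ∈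
          Ideal.span {(X 0 : MvPolynomial (Fin 2) R) * X 1 ^ n - MvPolynomial.C π} := by
        apply ih
        have : (X 1 : MvPolynomial (Fin 2) R) ^ k * (X 1 * p) = X 1 ^ (k + 1) * p := by ring
        rw [this]; exact h
      rw [Ideal.mem_span_singleton] at h1 ⊢
      obtain ⟨c, hc⟩ := h1
      have hdvd : (X 1 : MvPolynomial (Fin 2) R) ∣ (X 0 * X 1 ^ n - MvPolynomial.C π) * c :=
        ⟨p, by rw [← hc]⟩
      rcases (prime_X1 (R := R)).2.2 _ _ hdvd with hf | hc'
      · exfalso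
        obtain ⟨g, hg⟩ := hf
        have heval := congrArg
          (MvPolynomial.aeval (![X 0, 0] : Fin 2 → MvPolynomial (Fin 2) R)) hg
        have hn0 : n ≠ 0 := by omega
        simp [zero_pow hn0, algebraMap_eq, sub_eq_zero] at heval
        exact hπ (by simpa [MvPolynomial.C_inj] using heval)
      · obtain ⟨c', rfl⟩ := hc'
        refine ⟨c', ?_⟩
        have hX : (X 1 : MvPolynomial (Fin 2) R) ≠ 0 := X_ne_zero 1
        apply mul_left_cancel₀ hX
        rw [hc]; ring

theorem kernel_of_aeval_to_laurent_eq_span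
    {R : Type*} [CommRing R] [IsDomain R] [IsDiscreteValuationRing R]
    (π : R) (hπ : Irreducible π) (n : ℕ) (hn : 1 ≤ n) :
    RingHom.ker (MvPolynomial.aeval
        (![LaurentPolynomial.C π * LaurentPolynomial.T (-(n : ℤ)),
           LaurentPolynomial.T 1] : Fin 2 → LaurentPolynomial R) :
          MvPolynomial (Fin 2) R →ₐ[R] LaurentPolynomial R) =
      Ideal.span {(X 0 : MvPolynomial (Fin 2) R) * X 1 ^ n - MvPolynomial.C π} ∧
    (MvPolynomial.aeval
        (![LaurentPolynomial.C π * LaurentPolynomial.T (-(n : ℤ)),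
           LaurentPolynomial.T 1] : Fin 2 → LaurentPolynomial R) :
          MvPolynomial (Fin 2) R →ₐ[R] LaurentPolynomial R).range =
      Algebra.adjoin R
        ({LaurentPolynomial.T 1,
          LaurentPolynomial.C π * LaurentPolynomial.T (-(n : ℤ))} :
          Set (LaurentPolynomial R)) := by
  set v : Fin 2 → LaurentPolynomial R :=
    ![LaurentPolynomial.C π * LaurentPolynomial.T (-(n : ℤ)), LaurentPolynomial.T 1] with hv
  set φ : MvPolynomial (Fin 2) R →ₐ[R] LaurentPolynomial R := MvPolynomial.aeval v with hφ
  have hv0 : v 0 = LaurentPolynomial.C π * LaurentPolynomial.T (-(n : ℤ)) := rfl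
  have hv1 : v 1 = LaurentPolynomial.T 1 := rfl
  have hφf : φ ((X 0 : MvPolynomial (Fin 2) R) * X 1 ^ n - MvPolynomial.C π) = 0 := by
    have hT : (LaurentPolynomial.T 1 : LaurentPolynomial R) ^ n = LaurentPolynomial.T (n : ℤ) := by
      rw [T_pow, mul_one]
    have : φ ((X 0 : MvPolynomial (Fin 2) R) * X 1 ^ n - MvPolynomial.C π)
        = LaurentPolynomial.C π * LaurentPolynomial.T (-(n : ℤ)) *
            (LaurentPolynomial.T 1) ^ n - LaurentPolynomial.C π := by
      simp [hφ, algebraMap_eq, hv0, hv1]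
    rw [this, hT, mul_assoc, ← T_add, neg_add_cancel, T_zero, mul_one, sub_self]
  have hle : Ideal.span {(X 0 : MvPolynomial (Fin 2) R) * X 1 ^ n - MvPolynomial.C π} ≤
      RingHom.ker φ := by
    rw [Ideal.span_le, Set.singleton_subset_iff]
    exact hφf
  constructor
  · apply le_antisymm _ hle
    intro p hp
    rw [RingHom.mem_ker] at hp
    obtain ⟨k, Q, hkQ⟩ := auxA π n p
    -- applying φ to the element of the span kills it
    have hmem := hle hkQ
    rw [RingHom.mem_ker, map_sub, map_mul, map_pow] at hmem
    have hφX1 : φ (X 1 : MvPolynomial (Fin 2) R) = LaurentPolynomial.T 1 := by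
      simp [hφ, hv1]
    have hQ0 : Polynomial.toLaurent Q = 0 := by
      have h1 : φ (Polynomial.aeval (X 1 : MvPolynomial (Fin 2) R) Q)
          = Polynomial.aeval (LaurentPolynomial.T 1 : LaurentPolynomial R) Q := by
        rw [← Polynomial.aeval_algHom_apply, hφX1]
      have h2 : (Polynomial.aeval (LaurentPolynomial.T 1 : LaurentPolynomial R) :
          Polynomial R →ₐ[R] LaurentPolynomial R) = Polynomial.toLaurentAlg := by
        apply Polynomial.algHom_ext
        simp [Polynomial.toLaurentAlg_apply]
      rw [hp, mul_zero, zero_sub, neg_eq_zero, h1, h2, Polynomial.toLaurentAlg_apply] at hmem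
      exact hmem
    have hQ : Q = 0 := Polynomial.toLaurent_injective (by simpa using hQ0)
    have : (X 1 : MvPolynomial (Fin 2) R) ^ k * p ∈
        Ideal.span {(X 0 : MvPolynomial (Fin 2) R) * X 1 ^ n - MvPolynomial.C π} := by
      have := hkQ
      rw [hQ] at this
      simpa using this
    exact auxB π hπ.ne_zero n hn k p this
  · rw [← Algebra.adjoin_range_eq_range_aeval]
    congr 1
    rw [hv, Matrix.range_cons_cons_empty, Set.pair_comm]
end

section
/- Let j: U → T be an open immersion of schemes such that the canonical map O_T → j_* O_U is an isomorphism of sheaves of rings. Let f: X → Y be an affine morphism of schemes and let g: T → Y be any morphism. Then composition with j gives a bijection between morphisms h: T → X satisfying f∘h = g and morphisms h′: U → X satisfying f∘h′ = g∘j; in particular, every Y-morphism U → X extends uniquely to a Y-morphism T → X. -/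
/-!
Let `j : U ⟶ T` be an open immersion of schemes such that the canonical map
`O_T → j_* O_U` is an isomorphism (equivalently, every component `j.app V` is an
isomorphism).  Let `f : X ⟶ Y` be an affine morphism of schemes and `g : T ⟶ Y` any
morphism.  Then composition with `j` is a bijection between `Y`-morphisms `T ⟶ X`
lifting `g` and `Y`-morphisms `U ⟶ X` lifting `g ∘ j`.
-/

open AlgebraicGeometry CategoryTheory

open CategoryTheory.Limits

universe u

@[reducible] def AlgebraicGeometry.Scheme.openCoverOfISupEqTop {s : Type*} (X : Scheme.{u})
    (U : s → X.Opens) (hU : ⨆ i, U i = ⊤) : X.OpenCover where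
  I₀ := s
  X i := U i
  f i := (U i).ι
  mem₀ := (X.openCoverOfIsOpenCover U hU).mem₀

lemma isIso_of_arrow_iso {C : Type*} [Category C] {W X Y Z : C}
    {a : W ⟶ X} {b : Y ⟶ Z} (e : Arrow.mk a ≅ Arrow.mk b) [IsIso a] : IsIso b := by
  have w := e.hom.w
  simp only [Arrow.mk_left, Arrow.mk_right, Functor.id_obj, Arrow.mk_hom] at w
  have : b = inv e.hom.left ≫ a ≫ e.hom.right := by
    rw [← w]; simp
  rw [this]; infer_instance

lemma resLE_appTop_isIso {U T : Scheme.{u}} (j : U ⟶ T)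
    (hj : ∀ V : T.Opens, IsIso (j.app V)) (V : T.Opens) :
    IsIso ((j.resLE V (j ⁻¹ᵁ V) le_rfl).appTop) := by
  have : IsIso (j.appLE V (j ⁻¹ᵁ V) le_rfl) := by
    rw [Scheme.Hom.appLE_eq_app]; exact hj V
  exact isIso_of_arrow_iso (arrowResLEAppIso j V (j ⁻¹ᵁ V) le_rfl).symm

lemma bij_comp_affine {A B Z : Scheme.{u}} (k : A ⟶ B) (hk : IsIso k.appTop) [IsAffine Z] :
    Function.Bijective (fun h : B ⟶ Z => k ≫ h) := by
  constructor
  · intro h₁ h₂ e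
    apply ext_of_isAffine
    have e' := congrArg Scheme.Hom.appTop e
    simp only [Scheme.Hom.comp_appTop] at e'
    exact (cancel_mono k.appTop).mp e'
  · intro h'
    refine ⟨B.toSpecΓ ≫ Spec.map (h'.appTop ≫ inv k.appTop) ≫ Z.isoSpec.inv, ?_⟩
    dsimp only
    rw [Scheme.toSpecΓ_naturality_assoc, ← Spec.map_comp_assoc, Category.assoc,
      IsIso.inv_hom_id, Category.comp_id, ← Scheme.toSpecΓ_naturality_assoc]
    show h' ≫ Z.isoSpec.hom ≫ Z.isoSpec.inv = h'
    rw [Iso.hom_inv_id, Category.comp_id]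

lemma appLE_isIso {U T : Scheme.{u}} (j : U ⟶ T)
    (hj : ∀ V : T.Opens, IsIso (j.app V))
    {U' : T.Opens} {V : U.Opens} (e : V ≤ j ⁻¹ᵁ U') (he : j ⁻¹ᵁ U' ≤ V) :
    IsIso (j.appLE U' V e) := by
  have hV : V = j ⁻¹ᵁ U' := le_antisymm e he
  subst hV
  rw [Scheme.Hom.appLE]
  rw [Subsingleton.elim (homOfLE e) (𝟙 _), op_id, CategoryTheory.Functor.map_id,
    Category.comp_id]
  exact hj U'

lemma hj_res {U T : Scheme.{u}} (j : U ⟶ T) [IsOpenImmersion j]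
    (hj : ∀ V : T.Opens, IsIso (j.app V)) (W : T.Opens) (V : W.toScheme.Opens) :
    IsIso ((j.resLE W (j ⁻¹ᵁ W) le_rfl).app V) := by
  rw [← Scheme.Hom.appLE_eq_app, Scheme.Hom.resLE_appLE]
  apply appLE_isIso j hj
  rw [Scheme.Hom.resLE_preimage, Scheme.Hom.image_preimage_eq_opensRange_inf,
    Scheme.Opens.opensRange_ι]
  exact le_inf (fun a ha => W.ι_image_le V ha) le_rfl

lemma resLE_congr_hom {X Y : Scheme.{u}} {f g : X ⟶ Y} (h : f = g) (U : Y.Opens) (V : X.Opens)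
    (e : V ≤ f ⁻¹ᵁ U) : f.resLE U V e = g.resLE U V (h ▸ e) := by subst h; rfl

lemma cover_preimage_sup {T Y : Scheme.{u}} (g : T ⟶ Y) :
    (⨆ a : Y.affineCover.I₀, g ⁻¹ᵁ (Y.affineCover.f a).opensRange) = ⊤ := by
  apply top_le_iff.mp
  intro x _
  obtain ⟨y, hy⟩ := Y.affineCover.covers (g.base x)
  exact TopologicalSpace.Opens.mem_iSup.mpr ⟨Y.affineCover.idx (g.base x), ⟨y, hy⟩⟩

lemma inj_lemma {U T X Y : Scheme.{u}} (j : U ⟶ T)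
    (hj : ∀ V : T.Opens, IsIso (j.app V))
    (f : X ⟶ Y) [IsAffineHom f] (g : T ⟶ Y) (h₁ h₂ : T ⟶ X)
    (w₁ : h₁ ≫ f = g) (w₂ : h₂ ≫ f = g) (e : j ≫ h₁ = j ≫ h₂) : h₁ = h₂ := by
  apply (T.openCoverOfISupEqTop _ (cover_preimage_sup g)).hom_ext
  intro a
  set Ya : Y.Opens := (Y.affineCover.f a).opensRange with hYa
  have hXa : IsAffineOpen (f ⁻¹ᵁ Ya) :=
    (isAffineOpen_opensRange (Y.affineCover.f a)).preimage f
  haveI : IsAffine (f ⁻¹ᵁ Ya).toScheme := hXa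
  have ee₁ : (g ⁻¹ᵁ Ya : T.Opens) ≤ h₁ ⁻¹ᵁ (f ⁻¹ᵁ Ya) := by
    rw [← Scheme.Hom.comp_preimage, w₁]
  have ee₂ : (g ⁻¹ᵁ Ya : T.Opens) ≤ h₂ ⁻¹ᵁ (f ⁻¹ᵁ Ya) := by
    rw [← Scheme.Hom.comp_preimage, w₂]
  show (g ⁻¹ᵁ Ya).ι ≫ h₁ = (g ⁻¹ᵁ Ya).ι ≫ h₂
  rw [← Scheme.Hom.resLE_comp_ι h₁ ee₁, ← Scheme.Hom.resLE_comp_ι h₂ ee₂]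
  congr 1
  haveI : IsIso ((j.resLE (g ⁻¹ᵁ Ya) (j ⁻¹ᵁ (g ⁻¹ᵁ Ya)) le_rfl).appTop) :=
    resLE_appTop_isIso j hj _
  apply (bij_comp_affine (j.resLE (g ⁻¹ᵁ Ya) (j ⁻¹ᵁ (g ⁻¹ᵁ Ya)) le_rfl) this).1
  dsimp only
  rw [Scheme.Hom.resLE_comp_resLE, Scheme.Hom.resLE_comp_resLE]
  exact resLE_congr_hom e _ _ _


theorem affine_morphism_extension_along_pushforward_iso
    {U T X Y : Scheme} (j : U ⟶ T) [IsOpenImmersion j]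
    (hj : ∀ V : T.Opens, IsIso (j.app V))
    (f : X ⟶ Y) [IsAffineHom f] (g : T ⟶ Y) :
    Function.Bijective
      (fun h : { h : T ⟶ X // h ≫ f = g } =>
        (⟨j ≫ h.1, by rw [Category.assoc, h.2]⟩ : { h' : U ⟶ X // h' ≫ f = j ≫ g })) := by
  constructor
  · rintro ⟨h₁, w₁⟩ ⟨h₂, w₂⟩ e
    exact Subtype.ext (inj_lemma j hj f g h₁ h₂ w₁ w₂ (congrArg Subtype.val e))
  · rintro ⟨h', w'⟩
    -- notation
    set 𝒱 := Y.affineCover with h𝒱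
    let Ya : 𝒱.I₀ → Y.Opens := fun a => (𝒱.f a).opensRange
    let Ta : 𝒱.I₀ → T.Opens := fun a => g ⁻¹ᵁ Ya a
    let Xa : 𝒱.I₀ → X.Opens := fun a => f ⁻¹ᵁ Ya a
    have hYa : ∀ a, IsAffineOpen (Ya a) := fun a => isAffineOpen_opensRange (𝒱.f a)
    have hXa : ∀ a, IsAffineOpen (Xa a) := fun a => (hYa a).preimage f
    haveI : ∀ a, IsAffine (Xa a).toScheme := hXa
    haveI : ∀ a, IsAffine (Ya a).toScheme := hYa
    have eh' : ∀ a, (j ⁻¹ᵁ Ta a : U.Opens) ≤ h' ⁻¹ᵁ Xa a := fun a => by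
      show j ⁻¹ᵁ Ta a ≤ h' ⁻¹ᵁ (f ⁻¹ᵁ Ya a)
      rw [← Scheme.Hom.comp_preimage h' f, w', Scheme.Hom.comp_preimage]
    -- the affine local extensions
    let ka : ∀ a, (j ⁻¹ᵁ Ta a).toScheme ⟶ (Ta a).toScheme :=
      fun a => j.resLE (Ta a) (j ⁻¹ᵁ Ta a) le_rfl
    have hka : ∀ a, IsIso ((ka a).appTop) := fun a => resLE_appTop_isIso j hj (Ta a)
    have Hsurj : ∀ a, ∃ Ha : (Ta a).toScheme ⟶ (Xa a).toScheme,
        ka a ≫ Ha = h'.resLE (Xa a) (j ⁻¹ᵁ Ta a) (eh' a) :=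
      fun a => (bij_comp_affine (ka a) (hka a)).2 _
    choose Ha hHa using Hsurj
    -- compatibility of Ha with f and g
    have wHa : ∀ a, Ha a ≫ f.resLE (Ya a) (Xa a) le_rfl = g.resLE (Ya a) (Ta a) le_rfl := by
      intro a
      apply (bij_comp_affine (ka a) (hka a)).1
      dsimp only
      rw [← Category.assoc, hHa a, Scheme.Hom.resLE_comp_resLE, Scheme.Hom.resLE_comp_resLE]
      exact resLE_congr_hom w' _ _ _
    let t : ∀ a, (Ta a).toScheme ⟶ X := fun a => Ha a ≫ (Xa a).ι
    have wt : ∀ a, t a ≫ f = (Ta a).ι ≫ g := by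
      intro a
      show Ha a ≫ (Xa a).ι ≫ f = (Ta a).ι ≫ g
      rw [← Scheme.Hom.resLE_comp_ι f (le_rfl : Xa a ≤ f ⁻¹ᵁ Ya a), ← Category.assoc, wHa a,
        Scheme.Hom.resLE_comp_ι]
    -- gluing
    let 𝒰 := T.openCoverOfISupEqTop _ (cover_preimage_sup g)
    have hcomp : ∀ a b, pullback.fst (𝒰.f a) (𝒰.f b) ≫ t a =
        pullback.snd (𝒰.f a) (𝒰.f b) ≫ t b := by
      intro a b
      refine (cancel_epi (isPullback_opens_inf (Ta a) (Ta b)).isoPullback.hom).mp ?_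
      rw [← Category.assoc, ← Category.assoc]
      show ((isPullback_opens_inf (Ta a) (Ta b)).isoPullback.hom ≫
          pullback.fst (Ta a).ι (Ta b).ι) ≫ t a = ((isPullback_opens_inf (Ta a) (Ta b)).isoPullback.hom ≫
          pullback.snd (Ta a).ι (Ta b).ι) ≫ t b
      rw [IsPullback.isoPullback_hom_fst, IsPullback.isoPullback_hom_snd]
      -- now a morphism from T ∣ (Ta a ⊓ Ta b)
      have hinf : ∀ V : (Ta a ⊓ Ta b : T.Opens).toScheme.Opens,
          IsIso ((j.resLE (Ta a ⊓ Ta b) (j ⁻¹ᵁ (Ta a ⊓ Ta b)) le_rfl).app V) :=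
        hj_res j hj _
      refine inj_lemma _ hinf f ((Ta a ⊓ Ta b).ι ≫ g) _ _ ?_ ?_ ?_
      · rw [Category.assoc, wt a, ← Category.assoc, Scheme.homOfLE_ι]
      · rw [Category.assoc, wt b, ← Category.assoc, Scheme.homOfLE_ι]
      · -- both sides become (j ⁻¹ᵁ (Ta a ⊓ Ta b)).ι ≫ h' after unfolding
        have key : ∀ (c : 𝒱.I₀) (le : (Ta a ⊓ Ta b : T.Opens) ≤ Ta c),
            j.resLE (Ta a ⊓ Ta b) (j ⁻¹ᵁ (Ta a ⊓ Ta b)) le_rfl ≫ T.homOfLE le ≫ t c =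
            (j ⁻¹ᵁ (Ta a ⊓ Ta b)).ι ≫ h' := by
          intro c le
          have hle : (j ⁻¹ᵁ (Ta a ⊓ Ta b) : U.Opens) ≤ j ⁻¹ᵁ Ta c := fun x hx => le hx
          have step1 : j.resLE (Ta a ⊓ Ta b) (j ⁻¹ᵁ (Ta a ⊓ Ta b)) le_rfl ≫ T.homOfLE le =
              U.homOfLE hle ≫ ka c := by
            rw [Scheme.Hom.resLE_map j le_rfl le, Scheme.Hom.map_resLE]
          calc j.resLE (Ta a ⊓ Ta b) (j ⁻¹ᵁ (Ta a ⊓ Ta b)) le_rfl ≫ T.homOfLE le ≫ t c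
              = (j.resLE (Ta a ⊓ Ta b) (j ⁻¹ᵁ (Ta a ⊓ Ta b)) le_rfl ≫ T.homOfLE le) ≫ t c := by
                rw [Category.assoc]
            _ = (U.homOfLE hle ≫ ka c) ≫ Ha c ≫ (Xa c).ι := by rw [step1]
            _ = U.homOfLE hle ≫ (ka c ≫ Ha c) ≫ (Xa c).ι := by simp only [Category.assoc]
            _ = U.homOfLE hle ≫ h'.resLE (Xa c) (j ⁻¹ᵁ Ta c) (eh' c) ≫ (Xa c).ι := by rw [hHa c]
            _ = U.homOfLE hle ≫ (j ⁻¹ᵁ Ta c).ι ≫ h' := by rw [Scheme.Hom.resLE_comp_ι]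
            _ = (j ⁻¹ᵁ (Ta a ⊓ Ta b)).ι ≫ h' := by rw [← Category.assoc, Scheme.homOfLE_ι]
        rw [key a inf_le_left, key b inf_le_right]
    refine ⟨⟨𝒰.glueMorphisms t hcomp, ?_⟩, ?_⟩
    · apply 𝒰.hom_ext
      intro a
      rw [← Category.assoc, 𝒰.ι_glueMorphisms]
      exact wt a
    · apply Subtype.ext
      dsimp only
      have hsupU : (⨆ a, (j ⁻¹ᵁ Ta a : U.Opens)) = ⊤ := by
        have h2 := cover_preimage_sup (j ≫ g)
        simp only [Scheme.Hom.comp_preimage] at h2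
        exact h2
      apply (U.openCoverOfISupEqTop _ hsupU).hom_ext
      intro a
      show (j ⁻¹ᵁ Ta a).ι ≫ j ≫ 𝒰.glueMorphisms t hcomp = (j ⁻¹ᵁ Ta a).ι ≫ h'
      rw [← Category.assoc,
        show (j ⁻¹ᵁ Ta a).ι ≫ j = ka a ≫ (Ta a).ι from (Scheme.Hom.resLE_comp_ι j le_rfl).symm,
        Category.assoc,
        show (Ta a).ι ≫ 𝒰.glueMorphisms t hcomp = t a from 𝒰.ι_glueMorphisms t hcomp a]
      show ka a ≫ Ha a ≫ (Xa a).ι = _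
      rw [← Category.assoc, hHa a, Scheme.Hom.resLE_comp_ι]
end

section
/- Let R be a DVR with uniformizer π and let Λ be a Noetherian R-algebra. Let E₁ and E₂ be finitely generated Λ-modules which are flat over R, and let φ: E₁[1/π] → E₂[1/π] be an isomorphism of Λ[1/π]-modules between their localizations at the powers of π. For each n ∈ ℤ set G_n := { e ∈ E₁ : π^n · φ(e/1) lies in the image of E₂ in E₂[1/π] }. Then: (1) each G_n is a finitely generated Λ-submodule of E₁; (2) G_n = E₁ for all sufficiently large n; and (3) G_{−n−1} = π·G_{−n} for all sufficiently large n. -/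
/-!
Let `R` be a DVR with uniformizer `π` and `Λ` a Noetherian `R`-algebra.  Let `E₁`, `E₂` be
finitely generated `Λ`-modules which are flat over `R`, and `φ : E₁[1/π] ≃ E₂[1/π]` an
isomorphism between their localizations at the powers of `π` (it is automatically
`Λ[1/π]`-linear).  For `n ∈ ℤ` set `G_n := { e ∈ E₁ : π^n · φ(e/1) ∈ image of E₂ }`,
expressed without inverting `π` as: `π^(max n 0) · φ(e/1) ∈ π^(max (−n) 0) · (image of E₂)`.
Then: (1) each `G_n` is a finitely generated `Λ`-submodule of `E₁`;
(2) `G_n = E₁` for all sufficiently large `n`; and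
(3) `G_{−n−1} = π·G_{−n}` for all sufficiently large `n`.
-/

open LocalizedModule Pointwise

noncomputable section

variable {R : Type*} [CommRing R] [IsDomain R] [IsDiscreteValuationRing R] (π : R)
variable {Λ : Type*} [CommRing Λ] [Algebra R Λ] [IsNoetherianRing Λ]
variable (E₁ E₂ : Type*) [AddCommGroup E₁] [Module Λ E₁] [AddCommGroup E₂] [Module Λ E₂]
variable (φ : LocalizedModule (Submonoid.powers (algebraMap R Λ π)) E₁ ≃ₗ[Λ]
    LocalizedModule (Submonoid.powers (algebraMap R Λ π)) E₂)

/-- The submodule `G_n = { e ∈ E₁ : π^n · φ(e/1) lies in the image of E₂ }` of `E₁`. -/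
def Gsub (n : ℤ) : Submodule Λ E₁ :=
  Submodule.comap
    ((algebraMap R Λ π ^ n.toNat) •
      (φ.toLinearMap.comp (mkLinearMap (Submonoid.powers (algebraMap R Λ π)) E₁)))
    (LinearMap.range
      ((algebraMap R Λ π ^ (-n).toNat) •
        mkLinearMap (Submonoid.powers (algebraMap R Λ π)) E₂))

namespace GluingAux

set_option linter.unusedSectionVars false

lemma mem_Gsub_iff {n : ℤ} {a b : ℕ} (ha : n.toNat = a) (hb : (-n).toNat = b) {e : E₁} :
    e ∈ Gsub π E₁ E₂ φ n ↔ ∃ f : E₂,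
      (algebraMap R Λ π) ^ b • mk f (1 : Submonoid.powers (algebraMap R Λ π))
        = (algebraMap R Λ π) ^ a • φ (mk e 1) := by
  subst ha hb
  simp [Gsub, Submodule.mem_comap, LinearMap.mem_range, LinearMap.smul_apply,
    LinearMap.comp_apply, mkLinearMap_apply]

/-- If `E` is a finite module, a sufficiently large power of `p` clears denominators
of the image of `E/1` under any linear map to a localized module. -/
lemma exists_pow_clears {A : Type*} [CommRing A] (p : A) {E E' : Type*}
    [AddCommGroup E] [Module A E] [AddCommGroup E'] [Module A E'] [Module.Finite A E]
    (ψ : LocalizedModule (Submonoid.powers p) E →ₗ[A] LocalizedModule (Submonoid.powers p) E') :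
    ∃ N : ℕ, ∀ e : E, ∀ k ≥ N, ∃ f : E',
      mk f (1 : Submonoid.powers p) = p ^ k • ψ (mk e 1) := by
  let S := Submonoid.powers p
  have raise : ∀ (k l : ℕ), k ≤ l → ∀ e : E,
      (∃ f : E', mk f (1 : S) = p ^ k • ψ (mk e 1)) →
      (∃ f : E', mk f (1 : S) = p ^ l • ψ (mk e 1)) := by
    rintro k l hkl e ⟨f, hf⟩
    refine ⟨p ^ (l - k) • f, ?_⟩
    rw [← smul'_mk, hf, smul_smul, ← pow_add, Nat.sub_add_cancel hkl]
  have step : ∀ e : E, ∃ k : ℕ, ∃ f : E', mk f (1 : S) = p ^ k • ψ (mk e 1) := by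
    intro e
    obtain ⟨⟨f, s⟩, hs⟩ := IsLocalizedModule.surj S (mkLinearMap S E') (ψ (mk e 1))
    obtain ⟨k, hk⟩ := s.2
    have hk' : p ^ k = (s : A) := hk
    refine ⟨k, f, ?_⟩
    rw [hk', ← Submonoid.smul_def]
    exact (hs.trans (mkLinearMap_apply S E' f)).symm
  choose k f hf using step
  obtain ⟨t, ht⟩ := Module.Finite.fg_top (R := A) (M := E)
  have memB : ∀ e : E,
      (∃ f' : E', mk f' (1 : S) = p ^ t.sup k • ψ (mk e 1)) ↔ e ∈
        Submodule.comap (p ^ t.sup k • (ψ ∘ₗ mkLinearMap S E))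
          (LinearMap.range (mkLinearMap S E')) := by
    intro e
    simp [Submodule.mem_comap, LinearMap.mem_range, LinearMap.smul_apply,
      LinearMap.comp_apply, mkLinearMap_apply]
  refine ⟨t.sup k, fun e l hl => ?_⟩
  refine raise _ _ hl e ((memB e).mpr ?_)
  have htop : (⊤ : Submodule A E) ≤ Submodule.comap (p ^ t.sup k • (ψ ∘ₗ mkLinearMap S E))
      (LinearMap.range (mkLinearMap S E')) := by
    rw [← ht, Submodule.span_le]
    intro g hg
    exact (memB g).mp (raise (k g) (t.sup k) (Finset.le_sup hg) g ⟨f g, hf g⟩)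
  exact htop Submodule.mem_top

end GluingAux

theorem gluing_submodules_fg_and_stabilize
    (hπ : Irreducible π)
    [Module R E₁] [IsScalarTower R Λ E₁] [Module R E₂] [IsScalarTower R Λ E₂]
    [Module.Finite Λ E₁] [Module.Finite Λ E₂]
    [Module.Flat R E₁] [Module.Flat R E₂] :
    (∀ n : ℤ, (Gsub π E₁ E₂ φ n).FG) ∧
    (∃ N : ℤ, ∀ n ≥ N, Gsub π E₁ E₂ φ n = ⊤) ∧
    (∃ N : ℕ, ∀ n ≥ N,
      Gsub π E₁ E₂ φ (-(n : ℤ) - 1) = algebraMap R Λ π • Gsub π E₁ E₂ φ (-(n : ℤ))) := by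
  have hπR : IsSMulRegular R π := by
    intro a b h
    exact mul_left_cancel₀ hπ.ne_zero (by simpa [smul_eq_mul] using h)
  have hreg : IsSMulRegular E₁ (algebraMap R Λ π) := by
    rw [isSMulRegular_algebraMap_iff]
    exact ((TensorProduct.rid R E₁).isSMulRegular_congr π).mp (hπR.lTensor E₁)
  refine ⟨fun n => IsNoetherian.noetherian _, ?_, ?_⟩
  · -- (2) `G_n = ⊤` for `n` large
    obtain ⟨N, hN⟩ := GluingAux.exists_pow_clears (algebraMap R Λ π) φ.toLinearMap
    refine ⟨(N : ℤ), fun n hn => ?_⟩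
    have hn0 : 0 ≤ n := le_trans (Int.natCast_nonneg N) hn
    rw [eq_top_iff]
    intro e _
    rw [GluingAux.mem_Gsub_iff π E₁ E₂ φ (a := n.toNat) (b := 0) rfl (by omega)]
    obtain ⟨f, hf⟩ := hN e n.toNat (by omega)
    refine ⟨f, ?_⟩
    rw [pow_zero, one_smul]
    simpa using hf
  · -- (3) `G_{-n-1} = π • G_{-n}` for `n` large
    obtain ⟨N, hN⟩ := GluingAux.exists_pow_clears (algebraMap R Λ π) φ.symm.toLinearMap
    refine ⟨N, fun n hn => ?_⟩
    ext e
    rw [GluingAux.mem_Gsub_iff π E₁ E₂ φ (a := 0) (b := n + 1) (by omega) (by omega)]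
    constructor
    · rintro ⟨f, hf⟩
      rw [pow_zero, one_smul] at hf
      obtain ⟨e', he'⟩ := hN f n hn
      simp only [LinearEquiv.coe_coe] at he'
      have hφe' : φ (mk e' 1) = algebraMap R Λ π ^ n •
          mk f (1 : Submonoid.powers (algebraMap R Λ π)) := by
        rw [he', map_smul, LinearEquiv.apply_symm_apply]
      have he'mem : e' ∈ Gsub π E₁ E₂ φ (-(n : ℤ)) := by
        rw [GluingAux.mem_Gsub_iff π E₁ E₂ φ (a := 0) (b := n) (by omega) (by omega)]
        exact ⟨f, by rw [pow_zero, one_smul, hφe']⟩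
      have key : φ (mk e 1) = φ (mk (algebraMap R Λ π • e') 1) := by
        rw [← smul'_mk, map_smul, hφe', smul_smul, ← pow_succ', hf]
      have hmk2 : mk e (1 : Submonoid.powers (algebraMap R Λ π))
          = mk (algebraMap R Λ π • e') 1 := φ.injective key
      obtain ⟨u, hu⟩ := LocalizedModule.mk_eq.mp hmk2
      obtain ⟨a, ha⟩ := u.2
      have ha' : algebraMap R Λ π ^ a = (u : Λ) := ha
      simp only [Submonoid.smul_def, OneMemClass.coe_one, one_smul, ← ha'] at hu
      have he : e = algebraMap R Λ π • e' := (hreg.pow a) hu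
      rw [he]
      exact Submodule.smul_mem_pointwise_smul e' _ _ he'mem
    · intro he
      have he2 : e ∈ algebraMap R Λ π • (Gsub π E₁ E₂ φ (-(n : ℤ)) : Set E₁) := by
        rw [← Submodule.coe_pointwise_smul]; exact he
      obtain ⟨e', he', hee'⟩ := Set.mem_smul_set.mp he2
      have he'' : e' ∈ Gsub π E₁ E₂ φ (-(n : ℤ)) := he'
      rw [GluingAux.mem_Gsub_iff π E₁ E₂ φ (a := 0) (b := n) (by omega) (by omega)] at he''
      obtain ⟨f, hf⟩ := he''
      rw [pow_zero, one_smul] at hf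
      refine ⟨f, ?_⟩
      rw [pow_zero, one_smul, ← hee', ← smul'_mk, map_smul, ← hf, smul_smul, ← pow_succ']
end
end
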